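/- arXiv:1510.05460 — 5 statements merged into one kernel-verified Lean document; each statement's English description precedes it below -/
import Mathlib

section
/- Let A and B be positive integers, let L be a nonnegative integer, and let K be an integer such that gcd(A, B) divides K and |K| < L + max(A, B). Then there exist nonnegative integers a and b such that a·A − b·B = −K and L ≤ a·A, L ≤ b·B, a·A ≤ 2L + 2·lcm(A, B), and b·B ≤ 2L + 2·lcm(A, B). -/
/-- Claim about choosing the numbers of cycle repetitions: for positive `A, B`,
`L ≥ 0` and an integer `K` divisible by `gcd(A,B)` with `|K| < L + max(A,B)`,
there are nonnegative `a, b` with `aA − bB = −K` and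
`L ≤ aA, bB ≤ 2L + 2·lcm(A,B)`. -/
theorem exists_cycle_multiplicities (A B : ℕ) (hA : 0 < A) (hB : 0 < B)
    (L : ℕ) (K : ℤ) (hdvd : (Nat.gcd A B : ℤ) ∣ K)
    (hK : K.natAbs < L + max A B) :
    ∃ a b : ℕ, (a : ℤ) * A - (b : ℤ) * B = -K ∧
      L ≤ a * A ∧ L ≤ b * B ∧
      a * A ≤ 2 * L + 2 * Nat.lcm A B ∧
      b * B ≤ 2 * L + 2 * Nat.lcm A B := by
  obtain ⟨m, hm⟩ := hdvd
  set g := Nat.gcd A B with hg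
  set l := Nat.lcm A B with hl
  have hgpos : 0 < g := Nat.gcd_pos_of_pos_left B hA
  have hlpos : 0 < l := Nat.pos_of_ne_zero (Nat.lcm_ne_zero hA.ne' hB.ne')
  have hBgA : ((B / g : ℕ) : ℤ) * A = (l : ℤ) := by
    have h1 : g * (B / g) = B := Nat.mul_div_cancel' (Nat.gcd_dvd_right A B)
    have h2 : g * l = A * B := Nat.gcd_mul_lcm A B
    have h3 : g * (B / g * A) = g * l := by rw [← Nat.mul_assoc, h1, h2, Nat.mul_comm]
    have h4 := Nat.eq_of_mul_eq_mul_left hgpos h3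
    exact_mod_cast congrArg (fun n : ℕ => (n : ℤ)) h4
  have hAgB : ((A / g : ℕ) : ℤ) * B = (l : ℤ) := by
    have h1 : g * (A / g) = A := Nat.mul_div_cancel' (Nat.gcd_dvd_left A B)
    have h2 : g * l = A * B := Nat.gcd_mul_lcm A B
    have h3 : g * (A / g * B) = g * l := by rw [← Nat.mul_assoc, h1, h2]
    have h4 := Nat.eq_of_mul_eq_mul_left hgpos h3
    exact_mod_cast congrArg (fun n : ℕ => (n : ℤ)) h4
  set x0 : ℤ := -(Nat.gcdA A B) * m with hx0
  set y0 : ℤ := (Nat.gcdB A B) * m with hy0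
  have hbez : x0 * A - y0 * B = -K := by
    have hb := Nat.gcd_eq_gcd_ab A B
    rw [hm]
    rw [hx0, hy0]
    have : (g : ℤ) = A * Nat.gcdA A B + B * Nat.gcdB A B := hb
    linear_combination m * this
  set M : ℤ := max (L : ℤ) ((L : ℤ) - K) with hM
  set d : ℤ := x0 * A - M with hd
  set q : ℤ := d / (l : ℤ) with hq
  set r : ℤ := d % (l : ℤ) with hr
  have hlz : (0 : ℤ) < (l : ℤ) := by exact_mod_cast hlpos
  have hr0 : 0 ≤ r := Int.emod_nonneg d hlz.ne'
  have hrl : r < (l : ℤ) := Int.emod_lt_of_pos d hlz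
  have hdiv : (l : ℤ) * q + r = d := Int.mul_ediv_add_emod d l
  set a' : ℤ := x0 - q * ((B / g : ℕ) : ℤ) with ha'
  set b' : ℤ := y0 - q * ((A / g : ℕ) : ℤ) with hb'
  have haA : a' * A = M + r := by
    have : a' * A = x0 * A - q * (((B / g : ℕ) : ℤ) * A) := by ring
    rw [hBgA] at this
    rw [this]; linarith [hdiv]
  have hbB : b' * B = M + r + K := by
    have : b' * B = y0 * B - q * (((A / g : ℕ) : ℤ) * B) := by ring
    rw [hAgB] at this
    rw [this]
    have hy : y0 * B = x0 * A + K := by linarith [hbez]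
    rw [hy]; linarith [hdiv]
  have habs : (K.natAbs : ℤ) = |K| := Int.abs_eq_natAbs K |>.symm
  have hK1 : K ≤ (K.natAbs : ℤ) := by rw [habs]; exact le_abs_self K
  have hK2 : -K ≤ (K.natAbs : ℤ) := by rw [habs]; exact neg_le_abs K
  have hKlt : (K.natAbs : ℤ) < (L : ℤ) + (max A B : ℕ) := by exact_mod_cast hK
  have hmaxl : ((max A B : ℕ) : ℤ) ≤ (l : ℤ) := by
    have h1 : A ≤ l := Nat.le_of_dvd hlpos (Nat.dvd_lcm_left A B)
    have h2 : B ≤ l := Nat.le_of_dvd hlpos (Nat.dvd_lcm_right A B)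
    exact_mod_cast max_le h1 h2
  have hML : (L : ℤ) ≤ M := le_max_left _ _
  have hMLK : (L : ℤ) - K ≤ M := le_max_right _ _
  have hMub : M ≤ (L : ℤ) + K.natAbs := by
    apply max_le <;> linarith
  have hMKub : M + K ≤ (L : ℤ) + K.natAbs := by
    rcases le_or_gt 0 K with h | h
    · have : M = (L : ℤ) := by rw [hM]; exact max_eq_left (by linarith)
      rw [this]; linarith
    · have : M + K ≤ (L : ℤ) := by
        rcases max_cases (L : ℤ) ((L : ℤ) - K) with ⟨h1, _⟩ | ⟨h1, _⟩ <;> rw [hM, h1] <;> linarith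
      linarith
  have hAz : (0 : ℤ) < (A : ℤ) := by exact_mod_cast hA
  have hBz : (0 : ℤ) < (B : ℤ) := by exact_mod_cast hB
  have ha0 : 0 ≤ a' := by
    have h : 0 ≤ a' * A := by rw [haA]; have := Nat.cast_nonneg (α := ℤ) L; linarith
    exact (mul_nonneg_iff_of_pos_right hAz).mp h
  have hb0 : 0 ≤ b' := by
    have h : 0 ≤ b' * B := by rw [hbB]; have := Nat.cast_nonneg (α := ℤ) L; linarith
    exact (mul_nonneg_iff_of_pos_right hBz).mp h
  refine ⟨a'.toNat, b'.toNat, ?_, ?_, ?_, ?_, ?_⟩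
  · rw [Int.toNat_of_nonneg ha0, Int.toNat_of_nonneg hb0]; linarith [haA, hbB]
  · have : (L : ℤ) ≤ (a'.toNat : ℤ) * A := by
      rw [Int.toNat_of_nonneg ha0]; linarith [haA, hr0]
    exact_mod_cast this
  · have : (L : ℤ) ≤ (b'.toNat : ℤ) * B := by
      rw [Int.toNat_of_nonneg hb0]; linarith [hbB, hr0]
    exact_mod_cast this
  · have : (a'.toNat : ℤ) * A ≤ 2 * L + 2 * (l : ℤ) := by
      rw [Int.toNat_of_nonneg ha0]
      have := haA; linarith [hrl, hMub, hKlt, hmaxl]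
    exact_mod_cast this
  · have : (b'.toNat : ℤ) * B ≤ 2 * L + 2 * (l : ℤ) := by
      rw [Int.toNat_of_nonneg hb0]
      have := hbB; linarith [hrl, hMKub, hKlt, hmaxl]
    exact_mod_cast this
end

section
/- Let O be a one-counter system with n states, let g be a positive integer, and let σ be a consistent sequence of transitions of O such that no nonempty infix of σ is a cycle whose effect is divisible by g. Then the length of σ is at most g·n. -/
/-- A one-counter system (OCS). -/
structure OCS (Q : Type*) where
  pos : Set (Q × ℤ × Q)
  zero : Set (Q × ℤ × Q)
  pos_eff : ∀ t ∈ pos, t.2.1 = -1 ∨ t.2.1 = 0 ∨ t.2.1 = 1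
  zero_eff : ∀ t ∈ zero, t.2.1 = 0 ∨ t.2.1 = 1

/-- The effect of a sequence of transitions: the sum of its counter increments. -/
def transEff {Q : Type*} (σ : List (Q × ℤ × Q)) : ℤ :=
  (σ.map fun t => t.2.1).sum

/-- If `σ` is a consistent sequence of transitions of a one-counter system `O`
with `n` states and no nonempty infix of `σ` is a cycle (first source state
equals last target state) whose effect is divisible by `g > 0`, then
`σ` has length at most `g · n`. -/
theorem length_le_of_no_cycle_infix {Q : Type*} [Fintype Q] (O : OCS Q)
    (g : ℕ) (hg : 0 < g) (σ : List (Q × ℤ × Q))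
    (hmem : ∀ t ∈ σ, t ∈ O.pos ∪ O.zero)
    (hcons : σ.Chain' (fun s t => s.2.2 = t.1))
    (hnocyc : ∀ τ : List (Q × ℤ × Q), τ <:+: σ → τ ≠ [] →
      τ.head?.map Prod.fst = τ.getLast?.map (fun t => t.2.2) →
      ¬ ((g : ℤ) ∣ transEff τ)) :
    σ.length ≤ g * Fintype.card Q := by
  classical
  rcases eq_or_ne σ [] with rfl | hne
  · simp
  haveI : NeZero g := ⟨hg.ne'⟩
  by_contra hlen
  push_neg at hlen
  have hm0 : 0 < σ.length := List.length_pos_iff.mpr hne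
  set m := σ.length with hm
  let st : ℕ → Q := fun i => if h : i < m then σ[i].1 else (σ.getLast hne).2.2
  have htgt : ∀ k, 0 < k → k ≤ m → ∀ (h : k - 1 < m), σ[k-1].2.2 = st k := by
    intro k hk0 hkm h
    obtain ⟨k', rfl⟩ : ∃ k', k = k' + 1 := ⟨k - 1, by omega⟩
    rcases lt_or_eq_of_le hkm with hlt | heq
    · have h2 := List.isChain_iff_getElem.mp hcons k' (by omega)
      simp only [st, hlt, dif_pos, Nat.add_sub_cancel]
      exact h2
    · obtain rfl : k' = σ.length - 1 := by omega
      simp only [st, Nat.add_sub_cancel]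
      rw [dif_neg (by omega : ¬ (σ.length - 1 + 1 < m))]
      rw [List.getLast_eq_getElem]
  let f : Fin (m+1) → Q × ZMod g := fun i =>
    (st i, ((transEff (σ.take i) : ℤ) : ZMod g))
  have hcard : Fintype.card (Q × ZMod g) < Fintype.card (Fin (m+1)) := by
    simp only [Fintype.card_prod, ZMod.card, Fintype.card_fin]
    rw [mul_comm]
    omega
  obtain ⟨i, j, hij, hfeq⟩ := Fintype.exists_ne_map_eq_of_card_lt f hcard
  -- wlog i < j
  wlog hlt : (i : ℕ) < (j : ℕ) generalizing i j
  · have hne' : (i:ℕ) ≠ (j:ℕ) := fun h => hij (Fin.ext h)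
    exact this j i (Ne.symm hij) hfeq.symm (by omega)
  have hjm : (j : ℕ) ≤ m := by omega
  set τ : List (Q × ℤ × Q) := (σ.drop i).take (j - i) with hτ
  have hτinf : τ <:+: σ := ((σ.drop (i:ℕ)).take_prefix ((j:ℕ) - i)).isInfix.trans
    (σ.drop_suffix (i:ℕ)).isInfix
  have hτlen : τ.length = (j : ℕ) - i := by
    simp [hτ]; omega
  have hτne : τ ≠ [] := by
    intro h; rw [h] at hτlen; simp at hτlen; omega
  have hτ0 : ∀ (h : 0 < τ.length), τ[0].1 = st i := by
    intro h
    have : τ[0] = σ[(i:ℕ)] := by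
      simp [hτ, List.getElem_take, List.getElem_drop]
    rw [this]
    simp [st, show (i:ℕ) < m by omega]
  have hτlast : ∀ (h : τ.length - 1 < τ.length), τ[τ.length - 1].2.2 = st j := by
    intro h
    have h1 : τ[τ.length - 1] = σ[(j:ℕ) - 1] := by
      simp only [hτ, List.getElem_take, List.getElem_drop]
      congr 1
      simp only [List.length_take, List.length_drop]
      omega
    rw [h1]
    exact htgt j (by omega) hjm (by omega)
  -- the cycle condition
  have hcyc : τ.head?.map Prod.fst = τ.getLast?.map (fun t => t.2.2) := by
    rw [List.head?_eq_head hτne, List.getLast?_eq_getLast hτne]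
    simp only [Option.map_some]
    congr 1
    rw [List.head_eq_getElem, List.getLast_eq_getElem]
    rw [hτ0, hτlast]
    have := hfeq
    simp only [f, Prod.mk.injEq] at this
    exact this.1
  -- divisibility
  have hsplit : σ.take (j:ℕ) = σ.take (i:ℕ) ++ τ := by
    rw [hτ, ← List.take_add]
    congr 1
    omega
  have heff : transEff (σ.take (j:ℕ)) = transEff (σ.take (i:ℕ)) + transEff τ := by
    rw [hsplit]; simp [transEff]
  have hdvd : (g : ℤ) ∣ transEff τ := by
    have h2 : ((transEff (σ.take (i:ℕ)) : ℤ) : ZMod g)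
        = ((transEff (σ.take (j:ℕ)) : ℤ) : ZMod g) := by
      have := hfeq
      simp only [f, Prod.mk.injEq] at this
      exact this.2
    rw [← ZMod.intCast_zmod_eq_zero_iff_dvd]
    rw [heff] at h2
    push_cast at h2
    linear_combination h2.symm  -- (transEff τ : ZMod g) = 0
  exact hnocyc τ hτinf hτne hcyc hdvd
end

section
/- Let O be a one-counter system with state set Q and let a ∈ ℕ. Then there exists a one-counter system O_a with the same state set Q such that, for all p, q ∈ Q and all K ∈ ℕ: there is a path from (p, 0) to (q, 0) of length exactly K in O_a if and only if there is a path from (p, a) to (q, a) in O which contains exactly K+1 configurations of counter value at least a. -/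
/-- The step relation on configurations `(q, c) ∈ Q × ℕ`. -/
def OCS.Step {Q : Type*} (O : OCS Q) (γ γ' : Q × ℕ) : Prop :=
  (1 ≤ γ.2 ∧ (γ.1, (γ'.2 : ℤ) - (γ.2 : ℤ), γ'.1) ∈ O.pos) ∨
  (γ.2 = 0 ∧ (γ.1, (γ'.2 : ℤ) - (γ.2 : ℤ), γ'.1) ∈ O.zero)

/-- There is a path of length exactly `m` (number of steps) from `α` to `β`. -/
def OCS.PathOfLen {Q : Type*} (O : OCS Q) (m : ℕ) (α β : Q × ℕ) : Prop :=
  ∃ γ : ℕ → Q × ℕ, γ 0 = α ∧ γ m = β ∧ ∀ i < m, O.Step (γ i) (γ (i + 1))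

namespace LiftAux

variable {Q : Type*}

/-- A "low excursion" from `(p,a)` to `(q,a)` with all intermediate counters `< a`. -/
def Low (O : OCS Q) (a : ℕ) (p q : Q) : Prop :=
  ∃ t : List (Q × ℕ), List.Chain' O.Step ((p, a) :: t ++ [(q, a)]) ∧ ∀ c ∈ t, c.2 < a

def lift (O : OCS Q) (a : ℕ) : OCS Q where
  pos := O.pos
  zero := {t | (t.2.1 = 1 ∧ O.Step (t.1, a) (t.2.2, a + 1)) ∨ (t.2.1 = 0 ∧ Low O a t.1 t.2.2)}
  pos_eff := O.pos_eff
  zero_eff := fun t ht => ht.elim (fun h => Or.inr h.1) (fun h => Or.inl h.1)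

def cnt (a : ℕ) (l : List (Q × ℕ)) : ℕ := (l.filter (fun c => a ≤ c.2)).length

lemma cnt_cons (a : ℕ) (x : Q × ℕ) (l : List (Q × ℕ)) :
    cnt a (x :: l) = (if a ≤ x.2 then 1 else 0) + cnt a l := by
  by_cases h : a ≤ x.2 <;> simp [cnt, List.filter_cons, h] <;> omega

lemma cnt_append (a : ℕ) (l l' : List (Q × ℕ)) :
    cnt a (l ++ l') = cnt a l + cnt a l' := by
  simp [cnt, List.filter_append]

lemma cnt_low (a : ℕ) {l : List (Q × ℕ)} (h : ∀ c ∈ l, c.2 < a) : cnt a l = 0 := by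
  simp only [cnt, List.length_eq_zero_iff, List.filter_eq_nil_iff]
  intro c hc
  simpa using Nat.not_le.2 (h c hc)

lemma step_diff (O : OCS Q) {x y : Q × ℕ} (h : O.Step x y) :
    (y.2 : ℤ) = x.2 - 1 ∨ (y.2 : ℤ) = x.2 ∨ (y.2 : ℤ) = x.2 + 1 := by
  rcases h with ⟨_, hm⟩ | ⟨_, hm⟩
  · rcases O.pos_eff _ hm with h | h | h <;> simp only at h <;> omega
  · rcases O.zero_eff _ hm with h | h <;> simp only at h <;> omega

lemma getLast?_cons_of_ne_nil {α : Type*} (x : α) {l : List α} (h : l ≠ []) :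
    (x :: l).getLast? = l.getLast? := by
  have : (x :: l) = [x] ++ l := rfl
  rw [this, List.getLast?_append]
  cases hl : l.getLast? with
  | none => exact absurd (List.getLast?_eq_none_iff.1 hl) h
  | some y => rfl

/-- Forward: an `O'`-path maps to an `O`-path with matching count. -/
lemma mem_getLast? {α : Type*} {l : List α} {u : α} (h : l.getLast? = some u) : u ∈ l := by
  have h2 : l ≠ [] := by rintro rfl; simp at h
  rw [List.getLast?_eq_getLast h2, Option.some_inj] at h
  exact h ▸ List.getLast_mem h2

/-- Forward: an `O'`-path maps to an `O`-path with matching count. -/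
lemma fwd (O : OCS Q) (a : ℕ) :
    ∀ l' : List (Q × ℕ), List.Chain' (lift O a).Step l' →
    ∀ p c q, l'.head? = some (p, c) → l'.getLast? = some (q, 0) →
    ∃ l : List (Q × ℕ), List.Chain' O.Step l ∧ l.head? = some (p, c + a) ∧
      l.getLast? = some (q, a) ∧ cnt a l = l'.length := by
  intro l'
  induction l' with
  | nil => simp
  | cons x l'' ih =>
    intro hch p c q hhd hlast
    simp only [List.head?_cons, Option.some.injEq] at hhd
    subst hhd
    cases l'' with
    | nil =>
      simp only [List.getLast?_singleton, Option.some.injEq, Prod.mk.injEq] at hlast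
      obtain ⟨h1, h2⟩ := hlast
      subst h1; subst h2
      exact ⟨[(p, a)], by simp [List.Chain'], by simp, by simp, by simp [cnt]⟩
    | cons z rest =>
      rw [List.Chain', List.isChain_cons_cons] at hch
      obtain ⟨hstep, hch'⟩ := hch
      rw [getLast?_cons_of_ne_nil _ (by simp)] at hlast
      obtain ⟨l, hl, hlhd, hllast, hlcnt⟩ := ih hch' z.1 z.2 q (by simp) hlast
      have hlne : l ≠ [] := by rintro rfl; simp at hlhd
      rcases hstep with ⟨hc1, hm⟩ | ⟨hc0, hm⟩
      · -- positive step
        refine ⟨(p, c + a) :: l, ?_, by simp, ?_, ?_⟩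
        · rw [List.Chain', List.isChain_cons]
          refine ⟨?_, hl⟩
          intro y hy
          rw [hlhd] at hy
          simp only [Option.mem_def, Option.some.injEq] at hy
          subst hy
          left
          refine ⟨by omega, ?_⟩
          show (p, ((z.2 + a : ℕ) : ℤ) - ((c + a : ℕ) : ℤ), z.1) ∈ O.pos
          have hcast : ((z.2 + a : ℕ) : ℤ) - ((c + a : ℕ) : ℤ) = (z.2 : ℤ) - (c : ℕ) := by
            push_cast; ring
          rw [hcast]
          exact hm
        · rw [getLast?_cons_of_ne_nil _ hlne]; exact hllast
        · rw [cnt_cons]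
          simp only [if_pos (by omega : a ≤ c + a)]
          rw [hlcnt]
          simp only [List.length_cons]
          omega
      · -- zero step: c = 0
        simp only at hc0
        subst hc0
        rcases hm with ⟨he, hst0⟩ | ⟨he, hlow⟩
        · -- up-step at zero
          have hz2 : z.2 = 1 := by simpa using he
          refine ⟨(p, a) :: l, ?_, by simp, ?_, ?_⟩
          · rw [List.Chain', List.isChain_cons]
            refine ⟨?_, hl⟩
            intro y hy
            rw [hlhd] at hy
            simp only [Option.mem_def, Option.some.injEq] at hy
            subst hy
            have h1 : z.2 + a = a + 1 := by omega
            rw [h1]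
            exact hst0
          · rw [getLast?_cons_of_ne_nil _ hlne]; exact hllast
          · rw [cnt_cons]
            simp only [if_pos (le_refl a)]
            rw [hlcnt]
            simp only [List.length_cons]
            omega
        · -- low excursion
          have hz2 : z.2 = 0 := by simpa using he
          obtain ⟨t, hcht, htlow⟩ := hlow
          refine ⟨((p, a) :: t) ++ l, ?_, by simp, ?_, ?_⟩
          · rw [List.Chain', List.isChain_append]
            have hcht' : List.Chain' O.Step (((p, a) :: t) ++ [(z.1, a)]) := hcht
            have hsplit := List.isChain_append.1 hcht'
            refine ⟨hsplit.1, hl, ?_⟩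
            intro u hu y hy
            rw [hlhd] at hy
            simp only [Option.mem_def, Option.some.injEq] at hy
            subst hy
            have hza : z.2 + a = a := by omega
            rw [hza]
            have := hsplit.2.2 u hu (z.1, a) (by simp)
            exact this
          · rw [List.getLast?_append, hllast]; rfl
          · rw [cnt_append, cnt_cons]
            simp only [if_pos (le_refl a)]
            rw [cnt_low a htlow, hlcnt]
            simp only [List.length_cons]
            omega

/-- Backward: an `O`-path with head counter `≥ a` and last `(q,a)` contracts to an `O'`-path. -/
lemma bwd (O : OCS Q) (a : ℕ) :
    ∀ n (l : List (Q × ℕ)), l.length ≤ n → List.Chain' O.Step l →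
    ∀ p c q, l.head? = some (p, c) → a ≤ c → l.getLast? = some (q, a) →
    ∃ l' : List (Q × ℕ), List.Chain' (lift O a).Step l' ∧ l'.head? = some (p, c - a) ∧
      l'.getLast? = some (q, 0) ∧ l'.length = cnt a l := by
  intro n
  induction n with
  | zero =>
    intro l hlen _ p c q hhd _ _
    have : l = [] := List.length_eq_zero_iff.1 (by omega)
    subst this; simp at hhd
  | succ n ih =>
    intro l hlen hch p c q hhd hca hlast
    cases l with
    | nil => simp at hhd
    | cons x t =>
      simp only [List.head?_cons, Option.some.injEq] at hhd
      subst hhd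
      cases ht : t.dropWhile (fun u => decide (u.2 < a)) with
      | nil =>
        have htnil : t = [] := by
          by_contra hne
          have hlast' : t.getLast? = some (q, a) := by
            rwa [getLast?_cons_of_ne_nil _ hne] at hlast
          have hmem : (q, a) ∈ t := mem_getLast? hlast'
          have hqa : (q, a) ∈ t.takeWhile (fun u => decide (u.2 < a)) := by
            rw [← List.takeWhile_append_dropWhile (p := fun u => decide (u.2 < a)) (l := t), ht] at hmem
            simpa using hmem
          have := List.mem_takeWhile_imp hqa
          simp at this
        subst htnil
        simp only [List.getLast?_singleton, Option.some.injEq, Prod.mk.injEq] at hlast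
        obtain ⟨h1, h2⟩ := hlast
        subst h1; subst h2
        refine ⟨[(p, 0)], by simp [List.Chain'], by simp, by simp, ?_⟩
        simp [cnt, hca]
      | cons y t2 =>
        set P : Q × ℕ → Bool := fun u => decide (u.2 < a) with hP
        set t1 := t.takeWhile P with ht1def
        have hteq : t = t1 ++ y :: t2 := by
          conv_lhs => rw [← List.takeWhile_append_dropWhile (p := P) (l := t)]
          rw [ht]
        have hya : a ≤ y.2 := by
          have := List.head?_dropWhile_not P t
          rw [ht] at this
          simp only [List.head?_cons, hP] at this
          simpa using this
        have ht1low : ∀ u ∈ t1, u.2 < a := by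
          intro u hu
          have := List.mem_takeWhile_imp hu
          simpa [hP] using this
        have hlast2 : (y :: t2).getLast? = some (q, a) := by
          rw [hteq] at hlast
          have : (((p, c) :: t1) ++ (y :: t2)).getLast? = some (q, a) := hlast
          rw [List.getLast?_append] at this
          simpa using this
        rw [hteq] at hch
        have hch' : List.Chain' O.Step (((p, c) :: t1) ++ (y :: t2)) := hch
        rw [List.Chain', List.isChain_append] at hch'
        obtain ⟨hch1, hch2, hlink⟩ := hch'
        have hlen2 : (y :: t2).length ≤ n := by
          rw [hteq] at hlen
          simp only [List.length_cons, List.length_append] at hlen ⊢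
          omega
        obtain ⟨l'', hch'', hhd'', hlast'', hlen''⟩ :=
          ih (y :: t2) hlen2 hch2 y.1 y.2 q (by simp) hya hlast2
        have hl''ne : l'' ≠ [] := by rintro rfl; simp at hhd''
        -- the contracted step
        have hstep' : (lift O a).Step (p, c - a) (y.1, y.2 - a) := by
          cases ht1e : t1 with
          | nil =>
            -- direct step (p,c) → y
            rw [ht1e] at hlink
            have hxy : O.Step (p, c) y := hlink (p, c) (by simp) y rfl
            rcases Nat.lt_or_ge a c with hac | hac
            · -- c > a : positive step in the lift
              left
              refine ⟨by omega, ?_⟩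
              rcases hxy with ⟨_, hm⟩ | ⟨h0, _⟩
              · show (p, ((y.2 - a : ℕ) : ℤ) - ((c - a : ℕ) : ℤ), y.1) ∈ O.pos
                have hcast : ((y.2 - a : ℕ) : ℤ) - ((c - a : ℕ) : ℤ) = (y.2 : ℤ) - (c : ℤ) := by
                  omega
                rw [hcast]
                exact hm
              · omega
            · -- c = a
              have hceq : c = a := by omega
              right
              refine ⟨by omega, ?_⟩
              have hy2 : y.2 = a ∨ y.2 = a + 1 := by
                rcases step_diff O hxy with h | h | h <;> simp only at h <;> omega
              rcases hy2 with h | h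
              · -- effect 0 : low path with empty interior
                refine Or.inr ⟨?_, [], ?_, by simp⟩
                · show ((y.2 - a : ℕ) : ℤ) - ((c - a : ℕ) : ℤ) = 0
                  omega
                · show List.Chain' O.Step [(p, a), (y.1, a)]
                  have hyeq : (y.1, a) = y := by rw [← h]
                  rw [hyeq, ← hceq]
                  exact List.isChain_pair.2 hxy
              · -- effect 1
                refine Or.inl ⟨?_, ?_⟩
                · show ((y.2 - a : ℕ) : ℤ) - ((c - a : ℕ) : ℤ) = 1
                  omega
                · show O.Step (p, a) (y.1, a + 1)
                  have hyeq : (y.1, a + 1) = y := by rw [← h]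
                  rw [hyeq, ← hceq]
                  exact hxy
          | cons z t1' =>
            -- excursion below a
            have hz : z ∈ t1 := by rw [ht1e]; simp
            have hza : z.2 < a := ht1low z hz
            have hxz : O.Step (p, c) z := by
              rw [ht1e] at hch1
              exact (List.isChain_cons_cons.1 hch1).1
            have hceq : c = a := by
              rcases step_diff O hxz with h | h | h <;> simp only at h <;> omega
            -- last element of t1 steps to y
            have ht1ne : t1 ≠ [] := by rw [ht1e]; simp
            obtain ⟨u, hu⟩ : ∃ u, t1.getLast? = some u := by
              cases h : t1.getLast? with
              | none => exact absurd (List.getLast?_eq_none_iff.1 h) ht1ne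
              | some u => exact ⟨u, rfl⟩
            have hlast1 : ((p, c) :: t1).getLast? = some u := by
              rw [getLast?_cons_of_ne_nil _ ht1ne]; exact hu
            have huy : O.Step u y := hlink u (by rw [hlast1]; rfl) y rfl
            have hua : u.2 < a := ht1low u (mem_getLast? hu)
            have hy2 : y.2 = a := by
              rcases step_diff O huy with h | h | h <;> omega
            right
            refine ⟨by omega, Or.inr ⟨?_, t1, ?_, ht1low⟩⟩
            · show ((y.2 - a : ℕ) : ℤ) - ((c - a : ℕ) : ℤ) = 0
              omega
            · show List.Chain' O.Step (((p, a) :: t1) ++ [(y.1, a)])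
              rw [← hceq]
              have hyeq : (y.1, c) = y := by
                rw [← hceq] at hy2; rw [← hy2]
              rw [hyeq]
              refine List.isChain_append.2 ⟨hch1, List.isChain_singleton _, ?_⟩
              intro u' hu' w hw
              simp only [List.head?_cons, Option.mem_def, Option.some.injEq] at hw
              subst hw
              exact hlink u' hu' y rfl
        refine ⟨(p, c - a) :: l'', ?_, by simp, ?_, ?_⟩
        · rw [List.Chain', List.isChain_cons]
          refine ⟨?_, hch''⟩
          intro w hw
          rw [hhd''] at hw
          simp only [Option.mem_def, Option.some.injEq] at hw
          subst hw
          exact hstep'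
        · rw [getLast?_cons_of_ne_nil _ hl''ne]; exact hlast''
        · rw [hteq, cnt_cons, cnt_append, cnt_low a ht1low]
          simp only [if_pos hca, List.length_cons]
          omega


lemma map_range_getD {α : Type*} (l : List α) (d : α) :
    (List.range l.length).map (fun i => l.getD i d) = l := by
  induction l with
  | nil => simp
  | cons x t ih =>
    rw [List.length_cons, List.range_succ_eq_map, List.map_cons, List.map_map]
    have hf : ((fun i => (x :: t).getD i d) ∘ Nat.succ) = fun i => t.getD i d := by
      funext i; simp
    simp only [List.getD_cons_zero]
    rw [hf, ih]

lemma head?_map_range {α : Type*} (γ : ℕ → α) (m : ℕ) :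
    ((List.range (m + 1)).map γ).head? = some (γ 0) := by
  rw [List.range_succ_eq_map]; simp

lemma getLast?_map_range {α : Type*} (γ : ℕ → α) (m : ℕ) :
    ((List.range (m + 1)).map γ).getLast? = some (γ m) := by
  rw [List.range_succ, List.map_append, List.getLast?_append]; simp

lemma chain'_map_range {α : Type*} (R : α → α → Prop) (γ : ℕ → α) (m : ℕ) :
    List.Chain' R ((List.range (m + 1)).map γ) ↔ ∀ i < m, R (γ i) (γ (i + 1)) := by
  rw [List.Chain', List.isChain_map]
  exact List.isChain_range_succ (fun i j => R (γ i) (γ j)) m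

lemma card_eq_cnt (aa : ℕ) (γ : ℕ → Q × ℕ) (n : ℕ) :
    ((Finset.range n).filter (fun i => aa ≤ (γ i).2)).card = cnt aa ((List.range n).map γ) := by
  induction n with
  | zero => simp [cnt]
  | succ n ih =>
    rw [Finset.range_add_one, List.range_succ, List.map_append, cnt_append, Finset.filter_insert]
    by_cases h : aa ≤ (γ n).2
    · rw [if_pos h, Finset.card_insert_of_notMem (by simp), ih]
      simp [cnt, List.filter_cons, h]
    · rw [if_neg h, ih]
      simp [cnt, List.filter_cons, h]

end LiftAux

/-- For every one-counter system `O` over a state set `Q` and every `a : ℕ`,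
there is a one-counter system `O_a` over the same state set such that, for all
states `p, q` and every `K`, there is a path from `(p,0)` to `(q,0)` of length
exactly `K` in `O_a` iff there is a path from `(p,a)` to `(q,a)` in `O`
containing exactly `K+1` configurations of counter value at least `a`. -/


theorem lifted_system_exists {Q : Type*} [Fintype Q] (O : OCS Q) (a : ℕ) :
    ∃ O' : OCS Q, ∀ (p q : Q) (K : ℕ),
      O'.PathOfLen K (p, 0) (q, 0) ↔
      ∃ (m : ℕ) (γ : ℕ → Q × ℕ), γ 0 = (p, a) ∧ γ m = (q, a) ∧
        (∀ i < m, O.Step (γ i) (γ (i + 1))) ∧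
        ((Finset.range (m + 1)).filter (fun i => a ≤ (γ i).2)).card = K + 1 := by
  classical
  refine ⟨LiftAux.lift O a, fun p q K => ?_⟩
  constructor
  · rintro ⟨γ, h0, hK, hstep⟩
    have hch : List.Chain' (LiftAux.lift O a).Step ((List.range (K + 1)).map γ) :=
      (LiftAux.chain'_map_range _ _ _).2 hstep
    obtain ⟨l, hl, hlhd, hllast, hlcnt⟩ := LiftAux.fwd O a _ hch p 0 q
      (by rw [LiftAux.head?_map_range, h0]) (by rw [LiftAux.getLast?_map_range, hK])
    have hlne : l ≠ [] := by rintro rfl; simp at hlhd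
    have hlen1 : l.length - 1 + 1 = l.length := by
      cases l with
      | nil => exact absurd rfl hlne
      | cons x t => simp
    have hmap : (List.range (l.length - 1 + 1)).map (fun i => l.getD i (p, a)) = l := by
      rw [hlen1]; exact LiftAux.map_range_getD l _
    refine ⟨l.length - 1, fun i => l.getD i (p, a), ?_, ?_, ?_, ?_⟩
    · have h1 : some (l.getD 0 (p, a)) = some ((p : Q), 0 + a) := by
        rw [← LiftAux.head?_map_range (fun i => l.getD i (p, a)) (l.length - 1), hmap, hlhd]
      simpa using h1
    · have h1 : some (l.getD (l.length - 1) (p, a)) = some ((q : Q), a) := by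
        rw [← LiftAux.getLast?_map_range (fun i => l.getD i (p, a)) (l.length - 1), hmap, hllast]
      simpa using h1
    · exact (LiftAux.chain'_map_range _ _ _).1 (by rw [hmap]; exact hl)
    · rw [LiftAux.card_eq_cnt, hmap, hlcnt]
      simp
  · rintro ⟨m, γ, h0, hm, hstep, hcard⟩
    have hch : List.Chain' O.Step ((List.range (m + 1)).map γ) :=
      (LiftAux.chain'_map_range _ _ _).2 hstep
    have hcnt : LiftAux.cnt a ((List.range (m + 1)).map γ) = K + 1 := by
      rw [← LiftAux.card_eq_cnt]; exact hcard
    obtain ⟨l', hch', hhd', hlast', hlen'⟩ := LiftAux.bwd O a ((List.range (m + 1)).map γ).length _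
      le_rfl hch p a q (by rw [LiftAux.head?_map_range, h0]) le_rfl
      (by rw [LiftAux.getLast?_map_range, hm])
    have hlen1 : l'.length = K + 1 := by rw [hlen', hcnt]
    have hmap : (List.range (K + 1)).map (fun i => l'.getD i (p, 0)) = l' := by
      rw [← hlen1]; exact LiftAux.map_range_getD l' _
    refine ⟨fun i => l'.getD i (p, 0), ?_, ?_, ?_⟩
    · have h1 : some (l'.getD 0 (p, 0)) = some ((p : Q), a - a) := by
        rw [← LiftAux.head?_map_range (fun i => l'.getD i (p, 0)) K, hmap, hhd']
      simpa using h1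
    · have h1 : some (l'.getD K (p, 0)) = some ((q : Q), 0) := by
        rw [← LiftAux.getLast?_map_range (fun i => l'.getD i (p, 0)) K, hmap, hlast']
      simpa using h1
    · exact (LiftAux.chain'_map_range _ _ _).1 (by rw [hmap]; exact hch')
end

section
/- For every n ≥ 1 there exists a one-counter system O_1 with exactly 2n states, containing states p_1 and q_1, such that the configuration (q_1, 0) is reachable from (p_1, 0) and every path in O_1 from (p_1, 0) to (q_1, 0) has length at least n². Concretely, O_1 has states p_1, …, p_n, q_1, …, q_n and transitions (p_i, +1, p_{i+1}) and (q_i, 0, q_{i+1}) for 1 ≤ i < n, together with (q_n, −1, q_1) and (p_n, 0, q_1), all non-zero transitions except (p_1, +1, p_2), which is a zero test; the unique path from (p_1, 0) to (q_1, 0) has length exactly n². -/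
namespace LBaux

abbrev Qn (n : ℕ) : Type := Fin n ⊕ Fin n

def posP (n : ℕ) : (Qn n × ℤ × Qn n) → Prop
  | (Sum.inl i, d, Sum.inl j) => d = 1 ∧ 1 ≤ (i : ℕ) ∧ (j : ℕ) = (i : ℕ) + 1
  | (Sum.inl i, d, Sum.inr j) => d = 0 ∧ (i : ℕ) = n - 1 ∧ (j : ℕ) = 0
  | (Sum.inr _, _, Sum.inl _) => False
  | (Sum.inr i, d, Sum.inr j) =>
      (d = 0 ∧ (j : ℕ) = (i : ℕ) + 1) ∨ (d = -1 ∧ (i : ℕ) = n - 1 ∧ (j : ℕ) = 0)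

def zeroP (n : ℕ) : (Qn n × ℤ × Qn n) → Prop
  | (Sum.inl i, d, Sum.inl j) => d = 1 ∧ (i : ℕ) = 0 ∧ (j : ℕ) = 1
  | (Sum.inl i, d, Sum.inr j) => d = 0 ∧ (i : ℕ) = n - 1 ∧ (j : ℕ) = 0
  | _ => False

def myO (n : ℕ) : OCS (Qn n) where
  pos := Set.ofPred (posP n)
  zero := Set.ofPred (zeroP n)
  pos_eff := by
    rintro ⟨(i | i), d, (j | j)⟩ h <;> simp only [Set.mem_setOf_eq, posP] at h <;> tauto
  zero_eff := by
    rintro ⟨(i | i), d, (j | j)⟩ h <;> simp only [Set.mem_setOf_eq, zeroP] at h <;> tauto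

def traj (n : ℕ) (hn : 0 < n) (i : ℕ) : Qn n × ℕ :=
  if h : i < n then (Sum.inl ⟨i, h⟩, i)
  else (Sum.inr ⟨(i - n) % n, Nat.mod_lt _ hn⟩, n - 1 - (i - n) / n)

lemma hnn (n : ℕ) : (n - 1) * n + n = n * n := by
  cases n with
  | zero => simp
  | succ m => simp [Nat.succ_sub_one]; ring

lemma traj_end (n : ℕ) (hn : 0 < n) (m : ℕ)
    (h : traj n hn m = (Sum.inr ⟨0, hn⟩, 0)) : n ^ 2 ≤ m := by
  by_cases hm : m < n
  · simp [traj, dif_pos hm] at h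
  · simp only [traj, dif_neg hm, Prod.mk.injEq, Sum.inr.injEq, Fin.mk.injEq] at h
    obtain ⟨h1, h2⟩ := h
    have h3 : n - 1 ≤ (m - n) / n := by omega
    have h4 : (n - 1) * n ≤ m - n := (Nat.le_div_iff_mul_le hn).mp h3
    have h5 := hnn n
    have h6 : n ^ 2 = n * n := by ring
    omega

lemma traj_step_uniq (n : ℕ) (hn : 0 < n) (i : ℕ) (hi : i < n ^ 2) :
    (myO n).Step (traj n hn i) (traj n hn (i + 1)) ∧
      ∀ δ, (myO n).Step (traj n hn i) δ → δ = traj n hn (i + 1) := by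
  have hnn := hnn n
  have hsq : n ^ 2 = n * n := by ring
  by_cases h1 : i + 1 < n
  · -- phase 1, staying among p states
    have hi' : i < n := by omega
    have e1 : traj n hn i = (Sum.inl ⟨i, hi'⟩, i) := by simp [traj, dif_pos hi']
    have e2 : traj n hn (i + 1) = (Sum.inl ⟨i + 1, h1⟩, i + 1) := by
      simp [traj, dif_pos h1]
    rw [e1, e2]
    rcases Nat.eq_zero_or_pos i with rfl | h0
    · constructor
      · right
        refine ⟨rfl, ?_⟩
        simp only [OCS.Step, myO, Set.mem_setOf_eq, zeroP]
        exact ⟨by omega, by simp, by simp⟩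
      · rintro ⟨(s | s), c'⟩ hs <;>
          simp only [OCS.Step, myO, Set.mem_setOf_eq, posP, zeroP] at hs <;>
          [skip; skip] <;> rcases hs with ⟨hc, hmem⟩ | ⟨hc, hmem⟩
        · obtain ⟨hd, _, hj⟩ := hmem; omega
        · obtain ⟨hd, _, hj⟩ := hmem
          simp only [Prod.mk.injEq, Sum.inl.injEq]
          exact ⟨Fin.ext (by simp; try omega), by omega⟩
        · obtain ⟨hd, hx, hj⟩ := hmem
          omega
        · obtain ⟨hd, hx, hj⟩ := hmem
          omega
    · constructor
      · left
        refine ⟨h0, ?_⟩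
        simp only [OCS.Step, myO, Set.mem_setOf_eq, posP]
        exact ⟨by omega, by omega, by simp⟩
      · rintro ⟨(s | s), c'⟩ hs <;>
          simp only [OCS.Step, myO, Set.mem_setOf_eq, posP, zeroP] at hs <;>
          rcases hs with ⟨hc, hmem⟩ | ⟨hc, hmem⟩
        · obtain ⟨hd, _, hj⟩ := hmem
          simp only [Prod.mk.injEq, Sum.inl.injEq]
          exact ⟨Fin.ext (by simp; try omega), by omega⟩
        · obtain ⟨hd, hx, hj⟩ := hmem
          omega
        · obtain ⟨hd, hx, hj⟩ := hmem
          omega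
        · omega
  · by_cases h2 : i < n
    · -- boundary: i = n - 1, step to (q0, n-1)
      have e1 : traj n hn i = (Sum.inl ⟨i, h2⟩, i) := by simp [traj, dif_pos h2]
      have e2 : traj n hn (i + 1) = (Sum.inr ⟨0, hn⟩, n - 1) := by
        have hz : i + 1 - n = 0 := by omega
        simp only [traj, dif_neg (by omega : ¬ i + 1 < n), hz, Nat.zero_mod,
          Nat.zero_div, Nat.sub_zero]
      rw [e1, e2]
      rcases Nat.eq_zero_or_pos i with rfl | h0
      · -- n = 1
        have hn1 : n = 1 := by omega
        constructor
        · right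
          refine ⟨rfl, ?_⟩
          simp only [OCS.Step, myO, Set.mem_setOf_eq, zeroP]
          exact ⟨by omega, by omega, by simp⟩
        · rintro ⟨(s | s), c'⟩ hs <;>
            simp only [OCS.Step, myO, Set.mem_setOf_eq, posP, zeroP] at hs <;>
            rcases hs with ⟨hc, hmem⟩ | ⟨hc, hmem⟩
          · omega
          · obtain ⟨hd, _, hj⟩ := hmem
            have := s.isLt; omega
          · omega
          · obtain ⟨hd, _, hj⟩ := hmem
            simp only [Prod.mk.injEq, Sum.inr.injEq]
            exact ⟨Fin.ext (by simp; try omega), by omega⟩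
      · constructor
        · left
          refine ⟨h0, ?_⟩
          simp only [OCS.Step, myO, Set.mem_setOf_eq, posP]
          exact ⟨by omega, by omega, by simp⟩
        · rintro ⟨(s | s), c'⟩ hs <;>
            simp only [OCS.Step, myO, Set.mem_setOf_eq, posP, zeroP] at hs <;>
            rcases hs with ⟨hc, hmem⟩ | ⟨hc, hmem⟩
          · obtain ⟨hd, _, hj⟩ := hmem
            have := s.isLt; omega
          · omega
          · obtain ⟨hd, _, hj⟩ := hmem
            simp only [Prod.mk.injEq, Sum.inr.injEq]
            exact ⟨Fin.ext (by simp; try omega), by omega⟩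
          · omega
    · -- phase 2: among q states
      have hqr : n * ((i - n) / n) + (i - n) % n = i - n := Nat.div_add_mod _ n
      have hr : (i - n) % n < n := Nat.mod_lt _ hn
      have hq : (i - n) / n < n - 1 := by
        apply (Nat.div_lt_iff_lt_mul hn).mpr
        omega
      set q := (i - n) / n with hqdef
      set r := (i - n) % n with hrdef
      have e1 : traj n hn i = (Sum.inr ⟨r, hr⟩, n - 1 - q) := by
        simp only [traj, dif_neg h2]
        rfl
      have hcpos : 1 ≤ n - 1 - q := by omega
      have ht1 : i + 1 - n = (i - n) + 1 := by omega
      by_cases hrb : r + 1 < n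
      · have hm' : (i - n + 1) % n = r + 1 := by
          have e : i - n + 1 = n * q + (r + 1) := by omega
          rw [e, Nat.mul_add_mod, Nat.mod_eq_of_lt hrb]
        have hd' : (i - n + 1) / n = q := by
          have e : i - n + 1 = n * q + (r + 1) := by omega
          rw [e, Nat.mul_add_div hn, Nat.div_eq_of_lt hrb, Nat.add_zero]
        have e2 : traj n hn (i + 1) = (Sum.inr ⟨r + 1, hrb⟩, n - 1 - q) := by
          simp only [traj, dif_neg (by omega : ¬ i + 1 < n), ht1, hm', hd']
        rw [e1, e2]
        constructor
        · left
          refine ⟨hcpos, ?_⟩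
          simp only [OCS.Step, myO, Set.mem_setOf_eq, posP]
          exact Or.inl ⟨by omega, by simp⟩
        · rintro ⟨(s | s), c'⟩ hs <;>
            simp only [OCS.Step, myO, Set.mem_setOf_eq, posP, zeroP] at hs <;>
            rcases hs with ⟨hc, hmem⟩ | ⟨hc, hmem⟩
          · exact absurd hmem (by simp)
          · omega
          · rcases hmem with ⟨hd, hj⟩ | ⟨hd, hx, hj⟩
            · simp only [Prod.mk.injEq, Sum.inr.injEq]
              exact ⟨Fin.ext (by simp; try omega), by omega⟩
            · omega
          · omega
      · -- r = n - 1, wrap around and decrement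
        have hr1 : r = n - 1 := by omega
        have e : i - n + 1 = n * (q + 1) := by rw [Nat.mul_succ]; omega
        have hm' : (i - n + 1) % n = 0 := by rw [e]; exact Nat.mul_mod_right _ _
        have hd' : (i - n + 1) / n = q + 1 := by
          rw [e]; exact Nat.mul_div_cancel_left _ hn
        have e2 : traj n hn (i + 1) = (Sum.inr ⟨0, hn⟩, n - 1 - (q + 1)) := by
          simp only [traj, dif_neg (by omega : ¬ i + 1 < n), ht1, hm', hd']
        rw [e1, e2]
        constructor
        · left
          refine ⟨hcpos, ?_⟩
          simp only [OCS.Step, myO, Set.mem_setOf_eq, posP]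
          refine Or.inr ⟨by omega, by omega, by simp⟩
        · rintro ⟨(s | s), c'⟩ hs <;>
            simp only [OCS.Step, myO, Set.mem_setOf_eq, posP, zeroP] at hs <;>
            rcases hs with ⟨hc, hmem⟩ | ⟨hc, hmem⟩
          · exact absurd hmem (by simp)
          · omega
          · rcases hmem with ⟨hd, hj⟩ | ⟨hd, hx, hj⟩
            · have := s.isLt; omega
            · simp only [Prod.mk.injEq, Sum.inr.injEq]
              exact ⟨Fin.ext (by simp; try omega), by omega⟩
          · omega

end LBaux

/-- For every `n ≥ 1` there is a one-counter system with exactly `2n` states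
and states `p₁, q₁` such that `(q₁, 0)` is reachable from `(p₁, 0)` — indeed
by a path of length exactly `n²` — and every path from `(p₁, 0)` to `(q₁, 0)`
has length at least `n²`. -/
theorem lower_bound_low_counter_example (n : ℕ) (hn : 1 ≤ n) :
    ∃ (Q : Type) (_ : Fintype Q) (O : OCS Q) (p₁ q₁ : Q),
      Fintype.card Q = 2 * n ∧
      O.PathOfLen (n ^ 2) (p₁, 0) (q₁, 0) ∧
      ∀ m : ℕ, O.PathOfLen m (p₁, 0) (q₁, 0) → n ^ 2 ≤ m := by
  have hn0 : 0 < n := hn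
  refine ⟨LBaux.Qn n, inferInstance, LBaux.myO n, Sum.inl ⟨0, hn0⟩, Sum.inr ⟨0, hn0⟩,
    ?_, ?_, ?_⟩
  · simp [LBaux.Qn]; ring
  · refine ⟨LBaux.traj n hn0, ?_, ?_, fun i hi => (LBaux.traj_step_uniq n hn0 i hi).1⟩
    · simp [LBaux.traj, dif_pos hn0]
    · have hsq : n ^ 2 = n * n := by ring
      have hle : n ≤ n ^ 2 := by nlinarith
      have e : n ^ 2 - n = n * (n - 1) := by
        have hA := LBaux.hnn n
        have hB : n * (n - 1) = (n - 1) * n := Nat.mul_comm _ _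
        omega
      simp only [LBaux.traj, dif_neg (by omega : ¬ n ^ 2 < n), e,
        Nat.mul_mod_right, Nat.mul_div_cancel_left _ hn0, Prod.mk.injEq,
        Sum.inr.injEq, Fin.mk.injEq]
      refine ⟨trivial, by omega⟩
  · rintro m ⟨γ, h0, hm, hstep⟩
    by_contra hcon
    push_neg at hcon
    have key : ∀ i ≤ m, γ i = LBaux.traj n hn0 i := by
      intro i
      induction i with
      | zero => intro _; rw [h0]; simp [LBaux.traj, dif_pos hn0]
      | succ j ih =>
        intro hj
        have hjm : j < m := by omega
        have hj2 : j < n ^ 2 := by omega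
        have huniq := (LBaux.traj_step_uniq n hn0 j hj2).2 (γ (j + 1))
        rw [← ih (by omega)] at huniq
        exact huniq (hstep j hjm)
    have hfin := key m le_rfl
    rw [hm] at hfin
    exact absurd (LBaux.traj_end n hn0 m hfin.symm) (by omega)
end

section
/- Let n be a positive integer and let A be a nondeterministic one-counter automaton with m states over the alphabet {a} whose language is exactly the singleton {aⁿ}. Then 14·m² ≥ n; in particular m ≥ √(n/14), so any nondeterministic one-counter automaton accepting exactly {aⁿ} has at least Ω(√n) states. -/
/-- A nondeterministic one-counter automaton over alphabet `A`. -/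
structure OCA (Q : Type*) (A : Type*) extends OCS Q where
  lab : Q × ℤ × Q → Option A
  init : Set Q
  final : Set Q

/-- The automaton accepts `w` if `w` is the label of some path from an initial
configuration `(q₀, 0)`, `q₀ ∈ I`, to a configuration whose state is final. -/
def OCA.Accepts {Q A : Type*} (M : OCA Q A) (w : List A) : Prop :=
  ∃ (m : ℕ) (γ : ℕ → Q × ℕ),
    (γ 0).1 ∈ M.init ∧ (γ 0).2 = 0 ∧ (γ m).1 ∈ M.final ∧
    (∀ i < m, M.toOCS.Step (γ i) (γ (i + 1))) ∧
    (List.range m).filterMap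
      (fun i => M.lab ((γ i).1, ((γ (i + 1)).2 : ℤ) - ((γ i).2 : ℤ), (γ (i + 1)).1)) = w

namespace OCAproof

open List Finset

variable {Q : Type*}

/-- shift a configuration's counter up by `s`. -/
def shf (s : ℕ) (x : Q × ℕ) : Q × ℕ := (x.1, x.2 + s)

@[simp] lemma shf_fst (s : ℕ) (x : Q × ℕ) : (shf s x).1 = x.1 := rfl
@[simp] lemma shf_snd (s : ℕ) (x : Q × ℕ) : (shf s x).2 = x.2 + s := rfl

variable (M : OCA Q Unit)

/-- letter count of a single step. -/
def lc (x y : Q × ℕ) : ℕ :=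
  if (M.lab (x.1, (y.2 : ℤ) - (x.2 : ℤ), y.1)).isSome then 1 else 0

lemma lc_le_one (x y : Q × ℕ) : lc M x y ≤ 1 := by
  unfold lc; split <;> omega

lemma cast_shf (s : ℕ) (x y : Q × ℕ) :
    (((shf s y).2 : ℤ)) - ((shf s x).2 : ℤ) = (y.2 : ℤ) - (x.2 : ℤ) := by
  simp only [shf_snd]; push_cast; ring

lemma lc_shf (s : ℕ) (x y : Q × ℕ) : lc M (shf s x) (shf s y) = lc M x y := by
  unfold lc; rw [cast_shf]; rfl

lemma step_shf {x y : Q × ℕ} (s : ℕ) (hx : 1 ≤ x.2) (h : M.toOCS.Step x y) :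
    M.toOCS.Step (shf s x) (shf s y) := by
  rcases h with ⟨h1, h2⟩ | ⟨h1, h2⟩
  · left
    refine ⟨by simp; omega, ?_⟩
    show ((shf s x).1, ((shf s y).2 : ℤ) - ((shf s x).2 : ℤ), (shf s y).1) ∈ M.pos
    rw [cast_shf]; exact h2
  · omega

/-- all counters positive -/
def AP (l : List (Q × ℕ)) : Prop := ∀ x ∈ l, 1 ≤ x.2

lemma AP_map_shf {l : List (Q × ℕ)} (s : ℕ) (h : AP l) : AP (l.map (shf s)) := by
  intro x hx
  obtain ⟨y, hy, rfl⟩ := List.mem_map.mp hx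
  have := h y hy; simp; omega

def cost : List (Q × ℕ) → ℕ
  | [] => 0
  | [_] => 0
  | x :: y :: t => lc M x y + cost (y :: t)

@[simp] lemma cost_nil : cost M [] = 0 := rfl
@[simp] lemma cost_single (x : Q × ℕ) : cost M [x] = 0 := rfl
@[simp] lemma cost_cons2 (x y : Q × ℕ) (t : List (Q × ℕ)) :
    cost M (x :: y :: t) = lc M x y + cost M (y :: t) := rfl

lemma cost_map_shf (s : ℕ) : ∀ l : List (Q × ℕ), cost M (l.map (shf s)) = cost M l := by
  intro l; induction l with
  | nil => rfl
  | cons x t ih =>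
    cases t with
    | nil => rfl
    | cons y t' =>
      simp only [List.map_cons, cost_cons2, lc_shf] at *
      omega

lemma chain'_map_shf (s : ℕ) : ∀ l : List (Q × ℕ), AP l → l.Chain' M.toOCS.Step →
    (l.map (shf s)).Chain' M.toOCS.Step := by
  intro l; induction l with
  | nil => intro _ _; simp [List.Chain']
  | cons x t ih =>
    cases t with
    | nil => intro _ _; simp [List.Chain']
    | cons y t' =>
      intro hA hc
      simp only [List.Chain', List.isChain_cons_cons] at hc
      simp only [List.map_cons, List.Chain', List.isChain_cons_cons] at *
      exact ⟨step_shf M s (hA x (by simp)) hc.1,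
        ih (fun a ha => hA a (by simp [ha])) hc.2⟩


/-- join two lists overlapping in one point -/
def jn (x y : List (Q × ℕ)) : List (Q × ℕ) := x ++ y.tail

lemma jn_ne_nil {x y : List (Q × ℕ)} (hx : x ≠ []) : jn x y ≠ [] := by
  unfold jn; cases x with
  | nil => tauto
  | cons a t => simp

lemma head?_jn {x : List (Q × ℕ)} (y : List (Q × ℕ)) (hx : x ≠ []) :
    (jn x y).head? = x.head? := by
  unfold jn; cases x with
  | nil => tauto
  | cons a t => rfl

lemma getLast?_jn {x y : List (Q × ℕ)} (hl : x.getLast? = y.head?) (hy : y ≠ []) :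
    (jn x y).getLast? = y.getLast? := by
  unfold jn
  cases y with
  | nil => tauto
  | cons b u =>
    cases u with
    | nil => simpa using hl
    | cons c u' =>
      show (x ++ (c :: u')).getLast? = _
      rw [List.getLast?_append, List.getLast?_cons_cons,
        Option.or_of_isSome (List.getLast?_isSome.mpr (by simp))]

lemma chain'_jn {x y : List (Q × ℕ)} (hx : x.Chain' M.toOCS.Step)
    (hy : y.Chain' M.toOCS.Step) (hl : x.getLast? = y.head?) :
    (jn x y).Chain' M.toOCS.Step := by
  unfold jn
  refine List.IsChain.append hx (List.IsChain.tail hy) ?_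
  intro a ha b hb
  cases y with
  | nil => simp at hb
  | cons c u =>
    cases u with
    | nil => simp at hb
    | cons d u' =>
      simp at hb hl
      rw [hl] at ha
      simp at ha
      subst ha; subst hb
      exact (List.isChain_cons_cons.mp hy).1

lemma AP_jn {x y : List (Q × ℕ)} (hx : AP x) (hy : AP y) : AP (jn x y) := by
  intro a ha
  rcases List.mem_append.mp ha with h | h
  · exact hx a h
  · exact hy a (List.mem_of_mem_tail h)

lemma length_jn {x y : List (Q × ℕ)} (hy : y ≠ []) :
    (jn x y).length = x.length + y.length - 1 := by
  unfold jn
  cases y with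
  | nil => tauto
  | cons b u => simp [List.length_append]

lemma cost_jn : ∀ x : List (Q × ℕ), ∀ {y : List (Q × ℕ)}, x.getLast? = y.head? → x ≠ [] →
    cost M (jn x y) = cost M x + cost M y := by
  intro x
  induction x with
  | nil => tauto
  | cons a t ih =>
    intro y hl _
    cases t with
    | nil =>
      cases y with
      | nil => simp at hl
      | cons b u =>
        simp at hl
        subst hl
        show cost M (a :: u) = cost M [a] + cost M (a :: u)
        simp
    | cons b t' =>
      have h1 : jn (a :: b :: t') y = a :: jn (b :: t') y := rfl
      have h2 : jn (b :: t') y = b :: ((t' : List (Q × ℕ)) ++ y.tail) := rfl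
      rw [h1, h2, cost_cons2, ← h2, ih (by simpa using hl) (by simp)]
      simp; omega

/-- k+1 concatenated upward copies of a loop of effect δ -/
def reps (l : List (Q × ℕ)) (δ : ℕ) : ℕ → List (Q × ℕ)
  | 0 => l
  | k+1 => jn (reps l δ k) (l.map (shf ((k+1) * δ)))

lemma head?_map_shf (s : ℕ) {l : List (Q × ℕ)} {u : Q × ℕ} (h : l.head? = some u) :
    (l.map (shf s)).head? = some (shf s u) := by
  rw [List.head?_map, h]; rfl

lemma getLast?_map_shf (s : ℕ) {l : List (Q × ℕ)} {u : Q × ℕ} (h : l.getLast? = some u) :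
    (l.map (shf s)).getLast? = some (shf s u) := by
  rw [List.getLast?_map, h]; rfl

lemma ne_nil_of_head? {l : List (Q × ℕ)} {u : Q × ℕ} (h : l.head? = some u) : l ≠ [] := by
  cases l <;> simp_all

lemma reps_spec {l : List (Q × ℕ)} {q : Q} {u δ : ℕ}
    (hc : l.Chain' M.toOCS.Step) (hA : AP l)
    (hh : l.head? = some (q, u)) (hl : l.getLast? = some (q, u + δ)) :
    ∀ k, (reps l δ k).Chain' M.toOCS.Step ∧ AP (reps l δ k) ∧
      (reps l δ k).head? = some (q, u) ∧
      (reps l δ k).getLast? = some (q, u + δ + k * δ) ∧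
      cost M (reps l δ k) = (k+1) * cost M l := by
  intro k
  induction k with
  | zero => exact ⟨hc, hA, hh, by simpa [reps] using hl, by simp [reps]⟩
  | succ k ih =>
    obtain ⟨ih1, ih2, ih3, ih4, ih5⟩ := ih
    have hlink : (reps l δ k).getLast? = (l.map (shf ((k+1) * δ))).head? := by
      rw [ih4, head?_map_shf _ hh]
      show _ = some (q, u + (k+1) * δ)
      congr 2 <;> ring
    have hnn : l ≠ [] := ne_nil_of_head? hh
    have hnn2 : l.map (shf ((k+1) * δ)) ≠ [] := by simp [hnn]
    refine ⟨chain'_jn M ih1 (chain'_map_shf M _ l hA hc) hlink, AP_jn ih2 (AP_map_shf _ hA),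
      ?_, ?_, ?_⟩
    · rw [show reps l δ (k+1) = jn (reps l δ k) (l.map (shf ((k+1) * δ))) from rfl,
        head?_jn _ (ne_nil_of_head? ih3), ih3]
    · rw [show reps l δ (k+1) = jn (reps l δ k) (l.map (shf ((k+1) * δ))) from rfl,
        getLast?_jn hlink hnn2, getLast?_map_shf _ hl]
      show _ = some (q, u + δ + (k+1) * δ)
      congr 2 <;> ring
    · rw [show reps l δ (k+1) = jn (reps l δ k) (l.map (shf ((k+1) * δ))) from rfl,
        cost_jn M _ hlink (ne_nil_of_head? ih3), ih5, cost_map_shf]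
      ring

/-- k+1 concatenated downward copies of a loop of effect -δ -/
def repsD (l : List (Q × ℕ)) (δ : ℕ) : ℕ → List (Q × ℕ)
  | 0 => l
  | k+1 => jn (l.map (shf ((k+1) * δ))) (repsD l δ k)

lemma repsD_spec {l : List (Q × ℕ)} {q : Q} {v δ : ℕ}
    (hc : l.Chain' M.toOCS.Step) (hA : AP l)
    (hh : l.head? = some (q, v + δ)) (hl : l.getLast? = some (q, v)) :
    ∀ k, (repsD l δ k).Chain' M.toOCS.Step ∧ AP (repsD l δ k) ∧
      (repsD l δ k).head? = some (q, v + δ + k * δ) ∧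
      (repsD l δ k).getLast? = some (q, v) ∧
      cost M (repsD l δ k) = (k+1) * cost M l := by
  intro k
  induction k with
  | zero => exact ⟨hc, hA, by simpa [repsD] using hh, hl, by simp [repsD]⟩
  | succ k ih =>
    obtain ⟨ih1, ih2, ih3, ih4, ih5⟩ := ih
    have hnn : l ≠ [] := ne_nil_of_head? hh
    have hnn2 : l.map (shf ((k+1) * δ)) ≠ [] := by simp [hnn]
    have hlink : (l.map (shf ((k+1) * δ))).getLast? = (repsD l δ k).head? := by
      rw [ih3, getLast?_map_shf _ hl]
      show some (q, v + (k+1) * δ) = _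
      congr 2 <;> ring
    refine ⟨chain'_jn M (chain'_map_shf M _ l hA hc) ih1 hlink,
      AP_jn (AP_map_shf _ hA) ih2, ?_, ?_, ?_⟩
    · rw [show repsD l δ (k+1) = jn (l.map (shf ((k+1) * δ))) (repsD l δ k) from rfl,
        head?_jn _ hnn2, head?_map_shf _ hh]
      show _ = some (q, v + δ + (k+1) * δ)
      congr 2 <;> ring
    · rw [show repsD l δ (k+1) = jn (l.map (shf ((k+1) * δ))) (repsD l δ k) from rfl,
        getLast?_jn hlink (ne_nil_of_head? ih3), ih4]
    · rw [show repsD l δ (k+1) = jn (l.map (shf ((k+1) * δ))) (repsD l δ k) from rfl,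
        cost_jn M _ hlink hnn2, ih5, cost_map_shf]
      ring


lemma cost_snoc : ∀ (l : List (Q × ℕ)) {b : Q × ℕ}, l.getLast? = some b →
    ∀ a, cost M (l ++ [a]) = cost M l + lc M b a := by
  intro l
  induction l with
  | nil => simp
  | cons x t ih =>
    intro b hb a
    cases t with
    | nil =>
      simp at hb; subst hb
      show cost M [x, a] = _
      simp
    | cons y t' =>
      rw [List.getLast?_cons_cons] at hb
      show cost M (x :: y :: (t' ++ [a])) = _
      rw [cost_cons2]
      have := ih hb a
      rw [show (y :: t') ++ [a] = y :: (t' ++ [a]) from rfl] at this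
      rw [this, cost_cons2]
      omega

lemma getLast?_map_range (g : ℕ → Q × ℕ) (k : ℕ) :
    ((List.range (k+1)).map g).getLast? = some (g k) := by
  rw [List.range_succ, List.map_append]
  simp

lemma cost_map_range (g : ℕ → Q × ℕ) :
    ∀ k, cost M ((List.range (k+1)).map g) = ∑ t ∈ Finset.range k, lc M (g t) (g (t+1)) := by
  intro k
  induction k with
  | zero => simp [List.range_succ]
  | succ k ih =>
    rw [show (k+1+1) = (k+1)+1 from rfl, List.range_succ (n := k+1), List.map_append,
      List.map_singleton, cost_snoc M _ (getLast?_map_range g k), ih, Finset.sum_range_succ]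

/-- segment of a run function -/
def seg (γ : ℕ → Q × ℕ) (i j : ℕ) : List (Q × ℕ) := (List.range (j - i + 1)).map (fun t => γ (i + t))

lemma seg_ne_nil (γ : ℕ → Q × ℕ) (i j : ℕ) : seg γ i j ≠ [] := by
  unfold seg; simp

lemma head?_seg (γ : ℕ → Q × ℕ) (i j : ℕ) : (seg γ i j).head? = some (γ i) := by
  unfold seg
  rw [List.range_succ_eq_map]
  simp

lemma getLast?_seg (γ : ℕ → Q × ℕ) {i j : ℕ} (hij : i ≤ j) :
    (seg γ i j).getLast? = some (γ j) := by
  unfold seg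
  rw [getLast?_map_range]
  have : i + (j - i) = j := by omega
  rw [this]

lemma length_seg (γ : ℕ → Q × ℕ) (i j : ℕ) : (seg γ i j).length = j - i + 1 := by
  unfold seg; simp

lemma chain'_seg {γ : ℕ → Q × ℕ} {i j : ℕ}
    (hstep : ∀ t, i ≤ t → t < j → M.toOCS.Step (γ t) (γ (t+1))) :
    (seg γ i j).Chain' M.toOCS.Step := by
  unfold seg
  simp only [List.Chain']
  rw [List.isChain_map, List.isChain_range_succ]
  intro t ht
  have h1 : i + t < j := by omega
  have h2 : i + (t + 1) = (i + t) + 1 := by omega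
  rw [h2]
  exact hstep (i + t) (by omega) h1

lemma AP_seg {γ : ℕ → Q × ℕ} {i j : ℕ} (hij : i ≤ j) (h : ∀ t, i ≤ t → t ≤ j → 1 ≤ (γ t).2) :
    AP (seg γ i j) := by
  intro x hx
  obtain ⟨t, ht, rfl⟩ := List.mem_map.mp hx
  rw [List.mem_range] at ht
  exact h (i + t) (by omega) (by omega)

lemma cost_seg (γ : ℕ → Q × ℕ) {i j : ℕ} (hij : i ≤ j) :
    cost M (seg γ i j) = ∑ t ∈ Finset.Ico i j, lc M (γ t) (γ (t+1)) := by
  unfold seg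
  rw [cost_map_range, Finset.sum_Ico_eq_sum_range]
  apply Finset.sum_congr rfl
  intro t _
  have e : i + (t + 1) = i + t + 1 := by omega
  rw [e]

/-- list-level acceptance -/
def Acc' (l : List (Q × ℕ)) : Prop :=
  l.Chain' M.toOCS.Step ∧ ∃ u v : Q × ℕ, l.head? = some u ∧ l.getLast? = some v ∧
    u.1 ∈ M.init ∧ u.2 = 0 ∧ v.1 ∈ M.final

lemma unit_list_eq : ∀ (u v : List Unit), u.length = v.length → u = v := by
  intro u
  induction u with
  | nil => intro v h; cases v <;> simp_all
  | cons a t ih =>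
    intro v h
    cases v with
    | nil => simp_all
    | cons b t' => simp at h ⊢; exact ih t' h

lemma length_filterMap_range (f : ℕ → Option Unit) :
    ∀ k, ((List.range k).filterMap f).length = ∑ t ∈ Finset.range k, (if (f t).isSome then 1 else 0) := by
  intro k
  induction k with
  | zero => simp
  | succ k ih =>
    rw [List.range_succ, List.filterMap_append, List.length_append, ih, Finset.sum_range_succ]
    congr 1
    simp only [List.filterMap]
    cases h : f k <;> simp [h]

lemma cost_getD (d : Q × ℕ) : ∀ l : List (Q × ℕ),
    cost M l = ∑ t ∈ Finset.range (l.length - 1), lc M (l.getD t d) (l.getD (t+1) d) := by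
  intro l
  induction l with
  | nil => simp
  | cons x t ih =>
    cases t with
    | nil => simp
    | cons y t' =>
      rw [cost_cons2, ih]
      have hlen : (x :: y :: t').length - 1 = ((y :: t').length - 1) + 1 := by simp
      rw [hlen, Finset.sum_range_succ']
      simp only [List.getD_cons_succ, List.getD_cons_zero]
      omega

lemma accepts_iff (k : ℕ) : M.Accepts (List.replicate k ()) ↔ ∃ l, Acc' M l ∧ cost M l = k := by
  constructor
  · rintro ⟨mm, γ, h1, h2, h3, h4, h5⟩
    refine ⟨seg γ 0 mm, ⟨chain'_seg M (fun t _ ht => h4 t ht), γ 0, γ mm,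
      head?_seg γ 0 mm, getLast?_seg γ (Nat.zero_le mm), h1, h2, h3⟩, ?_⟩
    rw [cost_seg M γ (Nat.zero_le mm)]
    have := congrArg List.length h5
    rw [List.length_replicate, length_filterMap_range] at this
    rw [← this]
    rw [Finset.range_eq_Ico]
    rfl
  · rintro ⟨l, ⟨hc, u, v, hu, hv, hi, h0, hf⟩, hcost⟩
    have hnn : l ≠ [] := ne_nil_of_head? hu
    refine ⟨l.length - 1, fun i => l.getD i u, ?_, ?_, ?_, ?_, ?_⟩
    · have : l.getD 0 u = u := by cases l <;> simp_all
      show (l.getD 0 u).1 ∈ M.init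
      rw [this]; exact hi
    · have : l.getD 0 u = u := by cases l <;> simp_all
      show (l.getD 0 u).2 = 0
      rw [this]; exact h0
    · have : l.getD (l.length - 1) u = v := by
        have h1 : l.getLast? = l[l.length - 1]? := List.getLast?_eq_getElem? (l := l)
        rw [hv] at h1
        have h2 : l.length - 1 < l.length := by
          cases l with
          | nil => tauto
          | cons a t => simp
        rw [List.getD_eq_getElem l u h2]
        have := (List.getElem?_eq_some_iff).mp h1.symm
        obtain ⟨hh, he⟩ := this
        exact he
      show (l.getD (l.length - 1) u).1 ∈ M.final
      rw [this]; exact hf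
    · intro i hi2
      have h1 : i < l.length := by omega
      have h2 : i + 1 < l.length := by omega
      show M.toOCS.Step (l.getD i u) (l.getD (i+1) u)
      rw [List.getD_eq_getElem l u h1, List.getD_eq_getElem l u h2]
      exact List.isChain_iff_getElem.mp hc i (by omega)
    · apply unit_list_eq
      rw [List.length_replicate, length_filterMap_range, ← hcost, cost_getD M u l]
      rfl


lemma ivt_up (c : ℕ → ℕ) {a v : ℕ} : ∀ b, (∀ i, a ≤ i → i < b → c (i+1) ≤ c i + 1) →
    a ≤ b → c a ≤ v → v ≤ c b → ∃ i, a ≤ i ∧ i ≤ b ∧ c i = v := by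
  intro b
  induction b with
  | zero =>
    intro _ hab h1 h2
    have ha : a = 0 := by omega
    subst ha
    exact ⟨0, le_refl _, le_refl _, by omega⟩
  | succ b ih =>
    intro hs hab h1 h2
    by_cases hv : c (b+1) = v
    · exact ⟨b+1, hab, le_refl _, hv⟩
    · have hab' : a ≤ b := by
        rcases Nat.lt_or_ge a (b+1) with h | h
        · omega
        · exfalso; have : a = b + 1 := by omega
          subst this; omega
      have hb : v ≤ c b := by
        have := hs b hab' (by omega)
        omega
      obtain ⟨i, hi1, hi2, hi3⟩ := ih (fun i h1 h2 => hs i h1 (by omega)) hab' h1 hb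
      exact ⟨i, hi1, by omega, hi3⟩

lemma ivt_down (c : ℕ → ℕ) {a v : ℕ} : ∀ b, (∀ i, a ≤ i → i < b → c i ≤ c (i+1) + 1) →
    a ≤ b → c b ≤ v → v ≤ c a → ∃ i, a ≤ i ∧ i ≤ b ∧ c i = v := by
  intro b
  induction b with
  | zero =>
    intro _ hab h1 h2
    have ha : a = 0 := by omega
    subst ha
    exact ⟨0, le_refl _, le_refl _, by omega⟩
  | succ b ih =>
    intro hs hab h1 h2
    by_cases hv : c (b+1) = v
    · exact ⟨b+1, hab, le_refl _, hv⟩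
    · have hab' : a ≤ b := by
        rcases Nat.lt_or_ge a (b+1) with h | h
        · omega
        · exfalso; have : a = b + 1 := by omega
          subst this; omega
      have hb : c b ≤ v := by
        have := hs b hab' (by omega)
        omega
      obtain ⟨i, hi1, hi2, hi3⟩ := ih (fun i h1 h2 => hs i h1 (by omega)) hab' hb h2
      exact ⟨i, hi1, by omega, hi3⟩

/-- Context: a minimal accepting run for cost `n`, as a function. -/
structure Ctx (M : OCA Q Unit) (n : ℕ) where
  γ : ℕ → Q × ℕ
  L : ℕ
  hstep : ∀ i, i < L → M.toOCS.Step (γ i) (γ (i+1))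
  hinj : ∀ i, i ≤ L → ∀ j, j ≤ L → γ i = γ j → i = j
  h00 : (γ 0).2 = 0
  hinit : (γ 0).1 ∈ M.init
  hfin : (γ L).1 ∈ M.final
  htot : ∑ t ∈ Finset.range L, lc M (γ t) (γ (t+1)) = n
  huniq : ∀ k, (∃ l, Acc' M l ∧ cost M l = k) → k = n

variable {M} {n : ℕ}

lemma Ctx.cstep (C : Ctx M n) {i : ℕ} (h : i < C.L) :
    (C.γ (i+1)).2 ≤ (C.γ i).2 + 1 ∧ (C.γ i).2 ≤ (C.γ (i+1)).2 + 1 := by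
  rcases C.hstep i h with ⟨h1, h2⟩ | ⟨h1, h2⟩
  · have := M.pos_eff _ h2
    simp only at this
    omega
  · have := M.zero_eff _ h2
    simp only at this
    omega

/-- The accepting-run-with-cost-n property of a list, with its length. -/
def AccN (M : OCA Q Unit) (n len : ℕ) : Prop :=
  ∃ l, Acc' M l ∧ cost M l = n ∧ l.length = len

lemma ctx_exists [Fintype Q] (hlang : ∀ w : List Unit, M.Accepts w ↔ w = List.replicate n ()) :
    Nonempty (Ctx M n) := by
  classical
  have hacc : M.Accepts (List.replicate n ()) := (hlang _).mpr rfl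
  obtain ⟨l₁, hl₁, hc₁⟩ := (accepts_iff M n).mp hacc
  have huniq : ∀ k, (∃ l, Acc' M l ∧ cost M l = k) → k = n := by
    intro k hk
    have := (hlang _).mp ((accepts_iff M k).mpr hk)
    have := congrArg List.length this
    simpa using this
  have hex : ∃ len, AccN M n len := ⟨l₁.length, l₁, hl₁, hc₁, rfl⟩
  obtain ⟨l₀, h₀acc, h₀cost, h₀len⟩ := Nat.find_spec hex
  have hmin : ∀ len, len < Nat.find hex → ¬ AccN M n len := fun len h => Nat.find_min hex h
  obtain ⟨hchain, u, v, hu, hv, hiu, h0u, hfv⟩ := h₀acc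
  have hnn : l₀ ≠ [] := ne_nil_of_head? hu
  have hlen1 : 0 < l₀.length := List.length_pos_iff.mpr hnn
  set L := l₀.length - 1 with hL
  set γ : ℕ → Q × ℕ := fun i => l₀.getD i u with hγ
  have hget : ∀ i, ∀ hi : i < l₀.length, γ i = l₀[i]'hi :=
    fun i hi => List.getD_eq_getElem l₀ u hi
  have hγ0 : γ 0 = u := by
    obtain ⟨t0, ht0⟩ := List.head?_eq_some_iff.mp hu
    rw [hγ]
    show l₀.getD 0 u = u
    rw [ht0]
    rfl
  have hγL : γ L = v := by
    have h1 : l₀.getLast? = l₀[l₀.length - 1]? := List.getLast?_eq_getElem? (l := l₀)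
    rw [hv] at h1
    obtain ⟨hh, he⟩ := (List.getElem?_eq_some_iff).mp h1.symm
    rw [hget L (by omega)]
    exact he
  have hstep : ∀ i, i < L → M.toOCS.Step (γ i) (γ (i+1)) := by
    intro i hi
    rw [hget i (by omega), hget (i+1) (by omega)]
    exact List.isChain_iff_getElem.mp hchain i (by omega)
  have htot : ∑ t ∈ Finset.range L, lc M (γ t) (γ (t+1)) = n := by
    rw [← h₀cost, cost_getD M u l₀]
  have key : ∀ i j, i < j → j ≤ L → γ i = γ j → False := by
    intro i j hij hjL heq
    have c1 : (seg γ 0 i).Chain' M.toOCS.Step :=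
      chain'_seg M (fun t _ ht => hstep t (by omega))
    have c2 : (seg γ j L).Chain' M.toOCS.Step :=
      chain'_seg M (fun t ht1 ht2 => hstep t ht2)
    have hlink : (seg γ 0 i).getLast? = (seg γ j L).head? := by
      rw [getLast?_seg γ (by omega), head?_seg, heq]
    have hacc' : Acc' M (jn (seg γ 0 i) (seg γ j L)) := by
      refine ⟨chain'_jn M c1 c2 hlink, γ 0, γ L, ?_, ?_,
        by rw [hγ0]; exact hiu, by rw [hγ0]; exact h0u, by rw [hγL]; exact hfv⟩
      · rw [head?_jn _ (seg_ne_nil γ 0 i), head?_seg]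
      · rw [getLast?_jn hlink (seg_ne_nil γ j L), getLast?_seg γ hjL]
    have hcost' : cost M (jn (seg γ 0 i) (seg γ j L)) =
        (∑ t ∈ Finset.Ico 0 i, lc M (γ t) (γ (t+1))) +
        ∑ t ∈ Finset.Ico j L, lc M (γ t) (γ (t+1)) := by
      rw [cost_jn M _ hlink (seg_ne_nil γ 0 i), cost_seg M γ (by omega), cost_seg M γ hjL]
    have h1 : cost M (jn (seg γ 0 i) (seg γ j L)) = n := huniq _ ⟨_, hacc', rfl⟩
    have hsplit : ∑ t ∈ Finset.range L, lc M (γ t) (γ (t+1)) =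
        ((∑ t ∈ Finset.Ico 0 i, lc M (γ t) (γ (t+1))) +
         ∑ t ∈ Finset.Ico i j, lc M (γ t) (γ (t+1))) +
        ∑ t ∈ Finset.Ico j L, lc M (γ t) (γ (t+1)) := by
      rw [Finset.range_eq_Ico,
        ← Finset.sum_Ico_consecutive _ (by omega : (0:ℕ) ≤ j) hjL,
        ← Finset.sum_Ico_consecutive _ (by omega : (0:ℕ) ≤ i) (by omega : i ≤ j)]
    have hlen' : (jn (seg γ 0 i) (seg γ j L)).length = i + 1 + (L - j) := by
      rw [length_jn (seg_ne_nil γ j L), length_seg, length_seg]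
      omega
    have hAccN : AccN M n (i + 1 + (L - j)) := ⟨_, hacc', h1, hlen'⟩
    have hlt : i + 1 + (L - j) < Nat.find hex := by
      rw [← h₀len]
      omega
    exact hmin _ hlt hAccN
  have hinj : ∀ i, i ≤ L → ∀ j, j ≤ L → γ i = γ j → i = j := by
    intro i hi j hj heq
    rcases Nat.lt_trichotomy i j with h | h | h
    · exact absurd heq (fun he => key i j h hj he)
    · exact h
    · exact absurd heq (fun he => key j i h hi he.symm)
  exact ⟨⟨γ, L, hstep, hinj, by rw [hγ0]; exact h0u, by rw [hγ0]; exact hiu,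
    by rw [hγL]; exact hfv, htot, huniq⟩⟩


lemma map_shf_ne_nil {l : List (Q × ℕ)} (s : ℕ) (h : l ≠ []) : l.map (shf s) ≠ [] := by
  simp [h]

lemma one_le_sum_Ico {F : ℕ → ℕ} {i j e : ℕ} (he : i ≤ e) (he2 : e < j) (hF : F e = 1) :
    1 ≤ ∑ t ∈ Finset.Ico i j, F t := by
  have := Finset.single_le_sum (f := F) (fun t _ => Nat.zero_le _)
    (Finset.mem_Ico.mpr ⟨he, he2⟩)
  omega

lemma sum_split3 (F : ℕ → ℕ) {a b L : ℕ} (h1 : a ≤ b) (h2 : b ≤ L) :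
    ∑ t ∈ Finset.range L, F t =
      (∑ t ∈ Finset.Ico 0 a, F t) + (∑ t ∈ Finset.Ico a b, F t) + ∑ t ∈ Finset.Ico b L, F t := by
  rw [Finset.range_eq_Ico,
    ← Finset.sum_Ico_consecutive _ (Nat.zero_le b) h2,
    ← Finset.sum_Ico_consecutive _ (Nat.zero_le a) h1]

lemma sum_split5 (F : ℕ → ℕ) {a b c d L : ℕ} (h1 : a ≤ b) (h2 : b ≤ c) (h3 : c ≤ d)
    (h4 : d ≤ L) :
    ∑ t ∈ Finset.range L, F t =
      (∑ t ∈ Finset.Ico 0 a, F t) + (∑ t ∈ Finset.Ico a b, F t) + (∑ t ∈ Finset.Ico b c, F t)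
        + (∑ t ∈ Finset.Ico c d, F t) + ∑ t ∈ Finset.Ico d L, F t := by
  rw [Finset.range_eq_Ico,
    ← Finset.sum_Ico_consecutive _ (Nat.zero_le d) h4,
    ← Finset.sum_Ico_consecutive _ (Nat.zero_le c) h3,
    ← Finset.sum_Ico_consecutive _ (Nat.zero_le b) h2,
    ← Finset.sum_Ico_consecutive _ (Nat.zero_le a) h1]

lemma glue5 {A U Mi D E : List (Q × ℕ)}
    (cA : A.Chain' M.toOCS.Step) (cU : U.Chain' M.toOCS.Step) (cM : Mi.Chain' M.toOCS.Step)
    (cD : D.Chain' M.toOCS.Step) (cE : E.Chain' M.toOCS.Step)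
    (nA : A ≠ []) (nU : U ≠ []) (nM : Mi ≠ []) (nD : D ≠ []) (nE : E ≠ [])
    (l1 : A.getLast? = U.head?) (l2 : U.getLast? = Mi.head?)
    (l3 : Mi.getLast? = D.head?) (l4 : D.getLast? = E.head?) :
    (jn A (jn U (jn Mi (jn D E)))).Chain' M.toOCS.Step ∧
    (jn A (jn U (jn Mi (jn D E)))).head? = A.head? ∧
    (jn A (jn U (jn Mi (jn D E)))).getLast? = E.getLast? ∧
    cost M (jn A (jn U (jn Mi (jn D E)))) =
      cost M A + cost M U + cost M Mi + cost M D + cost M E := by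
  have j4c : (jn D E).Chain' M.toOCS.Step := chain'_jn M cD cE l4
  have j4h : (jn D E).head? = D.head? := head?_jn _ nD
  have j4l : (jn D E).getLast? = E.getLast? := getLast?_jn l4 nE
  have j4cost := cost_jn M D l4 nD
  have l3' : Mi.getLast? = (jn D E).head? := by rw [j4h]; exact l3
  have j3c := chain'_jn M cM j4c l3'
  have j3h : (jn Mi (jn D E)).head? = Mi.head? := head?_jn _ nM
  have j3l : (jn Mi (jn D E)).getLast? = E.getLast? := by
    rw [getLast?_jn l3' (jn_ne_nil nD)]; exact j4l
  have j3cost : cost M (jn Mi (jn D E)) = cost M Mi + (cost M D + cost M E) := by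
    rw [cost_jn M Mi l3' nM]; omega
  have l2' : U.getLast? = (jn Mi (jn D E)).head? := by rw [j3h]; exact l2
  have j2c := chain'_jn M cU j3c l2'
  have j2h : (jn U (jn Mi (jn D E))).head? = U.head? := head?_jn _ nU
  have j2l : (jn U (jn Mi (jn D E))).getLast? = E.getLast? := by
    rw [getLast?_jn l2' (jn_ne_nil nM)]; exact j3l
  have j2cost : cost M (jn U (jn Mi (jn D E))) = cost M U + (cost M Mi + (cost M D + cost M E)) := by
    rw [cost_jn M U l2' nU]; omega
  have l1' : A.getLast? = (jn U (jn Mi (jn D E))).head? := by rw [j2h]; exact l1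
  refine ⟨chain'_jn M cA j2c l1', head?_jn _ nA, ?_, ?_⟩
  · rw [getLast?_jn l1' (jn_ne_nil nU)]; exact j2l
  · rw [cost_jn M A l1' nA]; omega

variable [Fintype Q]

lemma pigeon (f : ℕ → Q) : ∃ l1 l2, 1 ≤ l1 ∧ l1 < l2 ∧ l2 ≤ Fintype.card Q + 1 ∧ f l1 = f l2 := by
  classical
  have hcard : (Finset.univ : Finset Q).card < (Finset.Icc 1 (Fintype.card Q + 1)).card := by
    rw [Nat.card_Icc, Finset.card_univ]
    omega
  obtain ⟨x, hx, y, hy, hxy, hf⟩ := Finset.exists_ne_map_eq_of_card_lt_of_maps_to hcard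
    (fun a _ => Finset.mem_univ (f a))
  rw [Finset.mem_Icc] at hx hy
  rcases Nat.lt_or_ge x y with h | h
  · exact ⟨x, y, hx.1, h, hy.2, hf⟩
  · exact ⟨y, x, hy.1, by omega, hx.2, hf.symm⟩

lemma Ctx.no_other (C : Ctx M n) (l : List (Q × ℕ)) (hacc : Acc' M l)
    (hk : cost M l ≠ n) : False := by
  exact hk (C.huniq _ ⟨l, hacc, rfl⟩)

lemma Ctx.suffix_distinct (C : Ctx M n) {z e1 e2 : ℕ}
    (hz : ∀ i, z < i → i ≤ C.L → 1 ≤ (C.γ i).2)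
    (he1 : z < e1) (h12 : e1 < e2) (he2 : e2 < C.L)
    (hq : (C.γ e1).1 = (C.γ e2).1)
    (hlet : lc M (C.γ e1) (C.γ (e1+1)) = 1) : False := by
  have γ := C.γ
  have hAP1 : AP (seg C.γ e1 e2) :=
    AP_seg (by omega) (fun t h1 h2 => hz t (by omega) (by omega))
  have hAP2 : AP (seg C.γ e2 C.L) :=
    AP_seg (by omega) (fun t h1 h2 => hz t (by omega) h2)
  have hc1 : (seg C.γ 0 e2).Chain' M.toOCS.Step :=
    chain'_seg M (fun t _ ht => C.hstep t (by omega))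
  have hc12 : (seg C.γ e1 e2).Chain' M.toOCS.Step :=
    chain'_seg M (fun t _ ht => C.hstep t (by omega))
  have hc2L : (seg C.γ e2 C.L).Chain' M.toOCS.Step :=
    chain'_seg M (fun t _ ht => C.hstep t ht)
  have hc01 : (seg C.γ 0 e1).Chain' M.toOCS.Step :=
    chain'_seg M (fun t _ ht => C.hstep t (by omega))
  have hsum1 : 1 ≤ ∑ t ∈ Finset.Ico e1 e2, lc M (C.γ t) (C.γ (t+1)) :=
    one_le_sum_Ico (le_refl e1) h12 hlet
  rcases Nat.lt_trichotomy (C.γ e1).2 (C.γ e2).2 with hlt | heq | hgt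
  · -- insert an extra copy of [e1,e2], shifted up by δ
    obtain ⟨δ, hδ⟩ : ∃ δ, (C.γ e2).2 = (C.γ e1).2 + δ := ⟨(C.γ e2).2 - (C.γ e1).2, by omega⟩
    set Y := (seg C.γ e1 e2).map (shf δ) with hY
    set Z := (seg C.γ e2 C.L).map (shf δ) with hZ
    have cY : Y.Chain' M.toOCS.Step := chain'_map_shf M δ _ hAP1 hc12
    have cZ : Z.Chain' M.toOCS.Step := chain'_map_shf M δ _ hAP2 hc2L
    have hYh : Y.head? = some (shf δ (C.γ e1)) := head?_map_shf δ (head?_seg C.γ e1 e2)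
    have hYl : Y.getLast? = some (shf δ (C.γ e2)) := getLast?_map_shf δ (getLast?_seg C.γ (by omega))
    have hZh : Z.head? = some (shf δ (C.γ e2)) := head?_map_shf δ (head?_seg C.γ e2 C.L)
    have hZl : Z.getLast? = some (shf δ (C.γ C.L)) := getLast?_map_shf δ (getLast?_seg C.γ (by omega))
    have lYZ : Y.getLast? = Z.head? := by rw [hYl, hZh]
    have lXY : (seg C.γ 0 e2).getLast? = (jn Y Z).head? := by
      rw [getLast?_seg C.γ (by omega : 0 ≤ e2), head?_jn _ (map_shf_ne_nil δ (seg_ne_nil _ _ _)), hYh]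
      exact congrArg some (Prod.ext hq.symm (by simp [shf]; omega))
    have cYZ : (jn Y Z).Chain' M.toOCS.Step := chain'_jn M cY cZ lYZ
    set l' := jn (seg C.γ 0 e2) (jn Y Z) with hl'
    have hacc : Acc' M l' := by
      refine ⟨chain'_jn M hc1 cYZ lXY, C.γ 0, shf δ (C.γ C.L), ?_, ?_, C.hinit, C.h00, C.hfin⟩
      · rw [hl', head?_jn _ (seg_ne_nil _ _ _), head?_seg]
      · rw [hl', getLast?_jn lXY (jn_ne_nil (map_shf_ne_nil δ (seg_ne_nil _ _ _))),
          getLast?_jn lYZ (map_shf_ne_nil δ (seg_ne_nil _ _ _)), hZl]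
    have hcost : cost M l' = cost M (seg C.γ 0 e2) + (cost M (seg C.γ e1 e2) + cost M (seg C.γ e2 C.L)) := by
      rw [hl', cost_jn M _ lXY (seg_ne_nil _ _ _), cost_jn M _ lYZ (map_shf_ne_nil δ (seg_ne_nil _ _ _)),
        hY, hZ, cost_map_shf, cost_map_shf]
    refine C.no_other l' hacc ?_
    rw [hcost, cost_seg M C.γ (by omega : (0:ℕ) ≤ e2), cost_seg M C.γ (by omega : e1 ≤ e2),
      cost_seg M C.γ (by omega : e2 ≤ C.L)]
    have hs := sum_split3 (fun t => lc M (C.γ t) (C.γ (t+1))) (by omega : e1 ≤ e2) (by omega : e2 ≤ C.L)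
    rw [C.htot] at hs
    beta_reduce at hs
    have h0e1 : (∑ t ∈ Finset.Ico 0 e2, lc M (C.γ t) (C.γ (t+1))) =
        (∑ t ∈ Finset.Ico 0 e1, lc M (C.γ t) (C.γ (t+1))) + ∑ t ∈ Finset.Ico e1 e2, lc M (C.γ t) (C.γ (t+1)) :=
      (Finset.sum_Ico_consecutive _ (by omega) (by omega)).symm
    omega
  · exact absurd (C.hinj e1 (by omega) e2 (by omega) (Prod.ext hq heq)) (by omega)
  · -- delete [e1,e2], shift the tail up
    obtain ⟨δ, hδ⟩ : ∃ δ, (C.γ e1).2 = (C.γ e2).2 + δ := ⟨(C.γ e1).2 - (C.γ e2).2, by omega⟩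
    set Z := (seg C.γ e2 C.L).map (shf δ) with hZ
    have cZ : Z.Chain' M.toOCS.Step := chain'_map_shf M δ _ hAP2 hc2L
    have hZh : Z.head? = some (shf δ (C.γ e2)) := head?_map_shf δ (head?_seg C.γ e2 C.L)
    have hZl : Z.getLast? = some (shf δ (C.γ C.L)) := getLast?_map_shf δ (getLast?_seg C.γ (by omega))
    have lXZ : (seg C.γ 0 e1).getLast? = Z.head? := by
      rw [getLast?_seg C.γ (by omega : 0 ≤ e1), hZh]
      exact congrArg some (Prod.ext hq (by simp [shf]; omega))
    set l' := jn (seg C.γ 0 e1) Z with hl'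
    have hacc : Acc' M l' := by
      refine ⟨chain'_jn M hc01 cZ lXZ, C.γ 0, shf δ (C.γ C.L), ?_, ?_, C.hinit, C.h00, C.hfin⟩
      · rw [hl', head?_jn _ (seg_ne_nil _ _ _), head?_seg]
      · rw [hl', getLast?_jn lXZ (map_shf_ne_nil δ (seg_ne_nil _ _ _)), hZl]
    have hcost : cost M l' = cost M (seg C.γ 0 e1) + cost M (seg C.γ e2 C.L) := by
      rw [hl', cost_jn M _ lXZ (seg_ne_nil _ _ _), hZ, cost_map_shf]
    refine C.no_other l' hacc ?_
    rw [hcost, cost_seg M C.γ (by omega : (0:ℕ) ≤ e1), cost_seg M C.γ (by omega : e2 ≤ C.L)]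
    have hs := sum_split3 (fun t => lc M (C.γ t) (C.γ (t+1))) (by omega : e1 ≤ e2) (by omega : e2 ≤ C.L)
    rw [C.htot] at hs
    beta_reduce at hs
    have h0e1 : (∑ t ∈ Finset.Ico 0 e2, lc M (C.γ t) (C.γ (t+1))) =
        (∑ t ∈ Finset.Ico 0 e1, lc M (C.γ t) (C.γ (t+1))) + ∑ t ∈ Finset.Ico e1 e2, lc M (C.γ t) (C.γ (t+1)) :=
      (Finset.sum_Ico_consecutive _ (by omega) (by omega)).symm
    omega


lemma Ctx.ivtD (C : Ctx M n) {A B v : ℕ} (hB : B ≤ C.L) (hAB : A ≤ B)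
    (h1 : (C.γ B).2 ≤ v) (h2 : v ≤ (C.γ A).2) : ∃ i, A ≤ i ∧ i ≤ B ∧ (C.γ i).2 = v := by
  obtain ⟨i, hh⟩ := ivt_down (fun i => (C.γ i).2) B
    (fun i hi1 hi2 => (C.cstep (by omega)).2) hAB (by exact h1) (by exact h2)
  exact ⟨i, hh.1, hh.2.1, hh.2.2⟩

lemma Ctx.ivtU (C : Ctx M n) {A B v : ℕ} (hB : B ≤ C.L) (hAB : A ≤ B)
    (h1 : (C.γ A).2 ≤ v) (h2 : v ≤ (C.γ B).2) : ∃ i, A ≤ i ∧ i ≤ B ∧ (C.γ i).2 = v := by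
  obtain ⟨i, hh⟩ := ivt_up (fun i => (C.γ i).2) B
    (fun i hi1 hi2 => (C.cstep (by omega)).1) hAB (by exact h1) (by exact h2)
  exact ⟨i, hh.1, hh.2.1, hh.2.2⟩

lemma Ctx.arch_distinct (C : Ctx M n) {a b e1 e2 : ℕ}
    (hab : a < e1) (h12 : e1 < e2) (he2b : e2 < b) (hbL : b ≤ C.L)
    (ha0 : (C.γ a).2 = 0) (hb0 : (C.γ b).2 = 0)
    (hpos : ∀ i, a < i → i < b → 1 ≤ (C.γ i).2)
    (hq : (C.γ e1).1 = (C.γ e2).1)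
    (hcc1 : Fintype.card Q + 1 ≤ (C.γ e1).2) (hcc2 : Fintype.card Q + 1 ≤ (C.γ e2).2)
    (hlet : lc M (C.γ e1) (C.γ (e1+1)) = 1) : False := by
  have hsum1 : 1 ≤ ∑ t ∈ Finset.Ico e1 e2, lc M (C.γ t) (C.γ (t+1)) :=
    one_le_sum_Ico (le_refl e1) h12 hlet
  rcases Nat.lt_trichotomy (C.γ e1).2 (C.γ e2).2 with hlt | heq | hgt
  · -- rising letter pair [e1,e2]; find a falling state-pair to the right
    obtain ⟨sf, hsf⟩ : ∃ sf : ℕ → ℕ, ∀ l, 1 ≤ l → l ≤ Fintype.card Q + 1 →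
        e2 ≤ sf l ∧ (C.γ (sf l)).2 = l ∧ sf l < b ∧
          (∀ i, e2 ≤ i → (C.γ i).2 = l → sf l ≤ i) := by
      refine ⟨fun l => sInf {i | e2 ≤ i ∧ (C.γ i).2 = l}, fun l h1 h2 => ?_⟩
      obtain ⟨i, hi1, hi2, hi3⟩ := C.ivtD (v := l) hbL (by omega : e2 ≤ b) (by omega) (by omega)
      have hmem := Nat.sInf_mem (⟨i, hi1, hi3⟩ :
        {i | e2 ≤ i ∧ (C.γ i).2 = l}.Nonempty)
      have hle : sInf {i | e2 ≤ i ∧ (C.γ i).2 = l} ≤ i := Nat.sInf_le ⟨hi1, hi3⟩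
      refine ⟨hmem.1, hmem.2, ?_, fun j hj1 hj2 => Nat.sInf_le ⟨hj1, hj2⟩⟩
      show sInf {i | e2 ≤ i ∧ (C.γ i).2 = l} < b
      by_contra hcon
      have heq : sInf {i | e2 ≤ i ∧ (C.γ i).2 = l} = b := by omega
      have h5 := hmem.2
      rw [heq, hb0] at h5
      omega
    have hanti : ∀ l1 l2, 1 ≤ l1 → l1 < l2 → l2 ≤ Fintype.card Q + 1 → sf l2 < sf l1 := by
      intro l1 l2 h1 h2 h3
      obtain ⟨hA1, hB1, hC1, hD1⟩ := hsf l1 (by omega) (by omega)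
      obtain ⟨hA2, hB2, hC2, hD2⟩ := hsf l2 (by omega) (by omega)
      obtain ⟨i, hi1, hi2, hi3⟩ := C.ivtD (v := l2) (show sf l1 ≤ C.L by omega) hA1 (by omega) (by omega)
      have h4 : sf l2 ≤ i := hD2 i hi1 hi3
      have hne : sf l2 ≠ sf l1 := by
        intro hh
        rw [hh, hB1] at hB2
        omega
      omega
    obtain ⟨l1, l2, hl1, hl12, hl2, hfe⟩ := pigeon (fun l => (C.γ (sf l)).1)
    obtain ⟨hA1, hB1, hC1, hD1⟩ := hsf l1 (by omega) (by omega)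
    obtain ⟨hA2, hB2, hC2, hD2⟩ := hsf l2 (by omega) (by omega)
    have hs21 : sf l2 < sf l1 := hanti l1 l2 (by omega) hl12 (by omega)
    obtain ⟨δ, hδ⟩ : ∃ δ, (C.γ e2).2 = (C.γ e1).2 + δ ∧ 1 ≤ δ :=
      ⟨(C.γ e2).2 - (C.γ e1).2, by omega, by omega⟩
    obtain ⟨d, hd⟩ : ∃ d, l2 = l1 + d ∧ 1 ≤ d := ⟨l2 - l1, by omega, by omega⟩
    -- pieces
    have cA : (seg C.γ 0 e1).Chain' M.toOCS.Step :=
      chain'_seg M (fun t _ ht => C.hstep t (by omega))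
    have cP : (seg C.γ e1 e2).Chain' M.toOCS.Step :=
      chain'_seg M (fun t _ ht => C.hstep t (by omega))
    have apP : AP (seg C.γ e1 e2) :=
      AP_seg (by omega) (fun t h1 h2 => hpos t (by omega) (by omega))
    have hPh : (seg C.γ e1 e2).head? = some ((C.γ e1).1, (C.γ e1).2) := by
      rw [head?_seg]
    have hPl : (seg C.γ e1 e2).getLast? = some ((C.γ e1).1, (C.γ e1).2 + δ) := by
      rw [getLast?_seg C.γ (by omega)]
      exact congrArg some (Prod.ext hq.symm (by omega))
    obtain ⟨cU, apU, hUh, hUl, hUcost⟩ := reps_spec M cP apP hPh hPl d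
    have cMi0 : (seg C.γ e2 (sf l2)).Chain' M.toOCS.Step :=
      chain'_seg M (fun t _ ht => C.hstep t (by omega))
    have apMi0 : AP (seg C.γ e2 (sf l2)) :=
      AP_seg (by omega) (fun t h1 h2 => hpos t (by omega) (by omega))
    have cMi : ((seg C.γ e2 (sf l2)).map (shf (d * δ))).Chain' M.toOCS.Step :=
      chain'_map_shf M _ _ apMi0 cMi0
    have hMih : ((seg C.γ e2 (sf l2)).map (shf (d * δ))).head? = some (shf (d * δ) (C.γ e2)) :=
      head?_map_shf _ (head?_seg C.γ e2 (sf l2))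
    have hMil : ((seg C.γ e2 (sf l2)).map (shf (d * δ))).getLast? = some (shf (d * δ) (C.γ (sf l2))) :=
      getLast?_map_shf _ (getLast?_seg C.γ (by omega))
    have cD : (seg C.γ (sf l2) (sf l1)).Chain' M.toOCS.Step :=
      chain'_seg M (fun t _ ht => C.hstep t (by omega))
    have apD : AP (seg C.γ (sf l2) (sf l1)) :=
      AP_seg (by omega) (fun t h1 h2 => hpos t (by omega) (by omega))
    have hDh : (seg C.γ (sf l2) (sf l1)).head? = some ((C.γ (sf l2)).1, l1 + d) := by
      rw [head?_seg]
      exact congrArg some (Prod.ext rfl (by omega))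
    have hDl : (seg C.γ (sf l2) (sf l1)).getLast? = some ((C.γ (sf l2)).1, l1) := by
      rw [getLast?_seg C.γ (by omega)]
      exact congrArg some (Prod.ext hfe (by omega))
    obtain ⟨cDn, apDn, hDnh, hDnl, hDncost⟩ := repsD_spec M cD apD hDh hDl δ
    have cE : (seg C.γ (sf l1) C.L).Chain' M.toOCS.Step :=
      chain'_seg M (fun t _ ht => C.hstep t ht)
    have hcm : d * δ = δ * d := Nat.mul_comm d δ
    -- links
    have lk1 : (seg C.γ 0 e1).getLast? = (reps (seg C.γ e1 e2) δ d).head? := by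
      rw [getLast?_seg C.γ (by omega), hUh]
    have lk2 : (reps (seg C.γ e1 e2) δ d).getLast? =
        ((seg C.γ e2 (sf l2)).map (shf (d * δ))).head? := by
      rw [hUl, hMih]
      exact congrArg some (Prod.ext hq (by simp [shf]; omega))
    have lk3 : ((seg C.γ e2 (sf l2)).map (shf (d * δ))).getLast? =
        (repsD (seg C.γ (sf l2) (sf l1)) d δ).head? := by
      rw [hMil, hDnh]
      exact congrArg some (Prod.ext rfl (by simp [shf]; omega))
    have lk4 : (repsD (seg C.γ (sf l2) (sf l1)) d δ).getLast? =
        (seg C.γ (sf l1) C.L).head? := by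
      rw [hDnl, head?_seg]
      exact congrArg some (Prod.ext hfe.symm (by omega))
    obtain ⟨gc, gh, gl, gcost⟩ := glue5 cA cU cMi cDn cE
      (seg_ne_nil _ _ _) (ne_nil_of_head? hUh) (map_shf_ne_nil _ (seg_ne_nil _ _ _))
      (ne_nil_of_head? hDnh) (seg_ne_nil _ _ _) lk1 lk2 lk3 lk4
    have hacc : Acc' M _ := ⟨gc, C.γ 0, C.γ C.L, by rw [gh, head?_seg],
      by rw [gl, getLast?_seg C.γ (by omega : sf l1 ≤ C.L)], C.hinit, C.h00, C.hfin⟩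
    refine C.no_other _ hacc ?_
    rw [gcost, hUcost, hDncost, cost_map_shf]
    rw [cost_seg M C.γ (by omega : (0:ℕ) ≤ e1), cost_seg M C.γ (by omega : e1 ≤ e2),
      cost_seg M C.γ (by omega : e2 ≤ sf l2), cost_seg M C.γ (by omega : sf l2 ≤ sf l1),
      cost_seg M C.γ (by omega : sf l1 ≤ C.L)]
    have hs := sum_split5 (fun t => lc M (C.γ t) (C.γ (t+1))) (by omega : e1 ≤ e2)
      (by omega : e2 ≤ sf l2) (by omega : sf l2 ≤ sf l1) (by omega : sf l1 ≤ C.L)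
    rw [C.htot] at hs
    beta_reduce at hs
    have hmul1 : (d+1) * (∑ t ∈ Finset.Ico e1 e2, lc M (C.γ t) (C.γ (t+1))) =
        (∑ t ∈ Finset.Ico e1 e2, lc M (C.γ t) (C.γ (t+1))) +
          d * (∑ t ∈ Finset.Ico e1 e2, lc M (C.γ t) (C.γ (t+1))) := by ring
    have hmul2 : (δ+1) * (∑ t ∈ Finset.Ico (sf l2) (sf l1), lc M (C.γ t) (C.γ (t+1))) =
        (∑ t ∈ Finset.Ico (sf l2) (sf l1), lc M (C.γ t) (C.γ (t+1))) +
          δ * (∑ t ∈ Finset.Ico (sf l2) (sf l1), lc M (C.γ t) (C.γ (t+1))) := by ring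
    have hmul3 : 0 < d * (∑ t ∈ Finset.Ico e1 e2, lc M (C.γ t) (C.γ (t+1))) :=
      Nat.mul_pos (by omega) (by omega)
    omega
  · exact absurd (C.hinj e1 (by omega) e2 (by omega) (Prod.ext hq heq)) (by omega)
  · -- falling letter pair [e1,e2]; find a rising state-pair to the left
    obtain ⟨tf, htf⟩ : ∃ tf : ℕ → ℕ, ∀ l, 1 ≤ l → l ≤ Fintype.card Q + 1 →
        tf l ≤ e1 ∧ (C.γ (tf l)).2 = l ∧ a < tf l ∧
          (∀ i, i ≤ e1 → (C.γ i).2 = l → i ≤ tf l) := by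
      refine ⟨fun l => sSup {i | i ≤ e1 ∧ (C.γ i).2 = l}, fun l h1 h2 => ?_⟩
      have hbdd : BddAbove {i | i ≤ e1 ∧ (C.γ i).2 = l} := ⟨e1, fun x hx => hx.1⟩
      obtain ⟨i, hi1, hi2, hi3⟩ := C.ivtU (v := l) (show e1 ≤ C.L by omega) (by omega : a ≤ e1)
        (by omega) (by omega)
      have hmem := Nat.sSup_mem (⟨i, hi2, hi3⟩ :
        {i | i ≤ e1 ∧ (C.γ i).2 = l}.Nonempty) hbdd
      have hge : i ≤ sSup {i | i ≤ e1 ∧ (C.γ i).2 = l} := le_csSup hbdd ⟨hi2, hi3⟩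
      refine ⟨hmem.1, hmem.2, ?_, fun j hj1 hj2 => le_csSup hbdd ⟨hj1, hj2⟩⟩
      show a < sSup {i | i ≤ e1 ∧ (C.γ i).2 = l}
      by_contra hcon
      have heq : sSup {i | i ≤ e1 ∧ (C.γ i).2 = l} = a := by omega
      have h5 := hmem.2
      rw [heq, ha0] at h5
      omega
    have hmono : ∀ l1 l2, 1 ≤ l1 → l1 < l2 → l2 ≤ Fintype.card Q + 1 → tf l1 < tf l2 := by
      intro l1 l2 h1 h2 h3
      obtain ⟨hA1, hB1, hC1, hD1⟩ := htf l1 (by omega) (by omega)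
      obtain ⟨hA2, hB2, hC2, hD2⟩ := htf l2 (by omega) (by omega)
      obtain ⟨i, hi1, hi2, hi3⟩ := C.ivtU (v := l2) (show e1 ≤ C.L by omega) hA1 (by omega) (by omega)
      have h4 : i ≤ tf l2 := hD2 i hi2 hi3
      have hne : tf l2 ≠ tf l1 := by
        intro hh
        rw [hh, hB1] at hB2
        omega
      omega
    obtain ⟨l1, l2, hl1, hl12, hl2, hfe⟩ := pigeon (fun l => (C.γ (tf l)).1)
    obtain ⟨hA1, hB1, hC1, hD1⟩ := htf l1 (by omega) (by omega)
    obtain ⟨hA2, hB2, hC2, hD2⟩ := htf l2 (by omega) (by omega)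
    have ht12 : tf l1 < tf l2 := hmono l1 l2 (by omega) hl12 (by omega)
    obtain ⟨dd, hδ⟩ : ∃ dd, (C.γ e1).2 = (C.γ e2).2 + dd ∧ 1 ≤ dd :=
      ⟨(C.γ e1).2 - (C.γ e2).2, by omega, by omega⟩
    obtain ⟨d, hd⟩ : ∃ d, l2 = l1 + d ∧ 1 ≤ d := ⟨l2 - l1, by omega, by omega⟩
    -- pieces
    have cA : (seg C.γ 0 (tf l1)).Chain' M.toOCS.Step :=
      chain'_seg M (fun t _ ht => C.hstep t (by omega))
    have cP : (seg C.γ (tf l1) (tf l2)).Chain' M.toOCS.Step :=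
      chain'_seg M (fun t _ ht => C.hstep t (by omega))
    have apP : AP (seg C.γ (tf l1) (tf l2)) :=
      AP_seg (by omega) (fun t h1 h2 => hpos t (by omega) (by omega))
    have hPh : (seg C.γ (tf l1) (tf l2)).head? = some ((C.γ (tf l1)).1, l1) := by
      rw [head?_seg]
      exact congrArg some (Prod.ext rfl (by omega))
    have hPl : (seg C.γ (tf l1) (tf l2)).getLast? = some ((C.γ (tf l1)).1, l1 + d) := by
      rw [getLast?_seg C.γ (by omega)]
      exact congrArg some (Prod.ext hfe.symm (by omega))
    obtain ⟨cU, apU, hUh, hUl, hUcost⟩ := reps_spec M cP apP hPh hPl dd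
    have cMi0 : (seg C.γ (tf l2) e1).Chain' M.toOCS.Step :=
      chain'_seg M (fun t _ ht => C.hstep t (by omega))
    have apMi0 : AP (seg C.γ (tf l2) e1) :=
      AP_seg (by omega) (fun t h1 h2 => hpos t (by omega) (by omega))
    have cMi : ((seg C.γ (tf l2) e1).map (shf (dd * d))).Chain' M.toOCS.Step :=
      chain'_map_shf M _ _ apMi0 cMi0
    have hMih : ((seg C.γ (tf l2) e1).map (shf (dd * d))).head? = some (shf (dd * d) (C.γ (tf l2))) :=
      head?_map_shf _ (head?_seg C.γ (tf l2) e1)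
    have hMil : ((seg C.γ (tf l2) e1).map (shf (dd * d))).getLast? = some (shf (dd * d) (C.γ e1)) :=
      getLast?_map_shf _ (getLast?_seg C.γ (by omega))
    have cD : (seg C.γ e1 e2).Chain' M.toOCS.Step :=
      chain'_seg M (fun t _ ht => C.hstep t (by omega))
    have apD : AP (seg C.γ e1 e2) :=
      AP_seg (by omega) (fun t h1 h2 => hpos t (by omega) (by omega))
    have hDh : (seg C.γ e1 e2).head? = some ((C.γ e1).1, (C.γ e2).2 + dd) := by
      rw [head?_seg]
      exact congrArg some (Prod.ext rfl (by omega))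
    have hDl : (seg C.γ e1 e2).getLast? = some ((C.γ e1).1, (C.γ e2).2) := by
      rw [getLast?_seg C.γ (by omega)]
      exact congrArg some (Prod.ext hq.symm rfl)
    obtain ⟨cDn, apDn, hDnh, hDnl, hDncost⟩ := repsD_spec M cD apD hDh hDl d
    have cE : (seg C.γ e2 C.L).Chain' M.toOCS.Step :=
      chain'_seg M (fun t _ ht => C.hstep t ht)
    have hcm : dd * d = d * dd := Nat.mul_comm dd d
    -- links
    have lk1 : (seg C.γ 0 (tf l1)).getLast? = (reps (seg C.γ (tf l1) (tf l2)) d dd).head? := by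
      rw [getLast?_seg C.γ (by omega), hUh]
      exact congrArg some (Prod.ext rfl (by omega))
    have lk2 : (reps (seg C.γ (tf l1) (tf l2)) d dd).getLast? =
        ((seg C.γ (tf l2) e1).map (shf (dd * d))).head? := by
      rw [hUl, hMih]
      exact congrArg some (Prod.ext hfe (by simp [shf]; omega))
    have lk3 : ((seg C.γ (tf l2) e1).map (shf (dd * d))).getLast? =
        (repsD (seg C.γ e1 e2) dd d).head? := by
      rw [hMil, hDnh]
      exact congrArg some (Prod.ext rfl (by simp [shf]; omega))
    have lk4 : (repsD (seg C.γ e1 e2) dd d).getLast? = (seg C.γ e2 C.L).head? := by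
      rw [hDnl, head?_seg]
      exact congrArg some (Prod.ext hq rfl)
    obtain ⟨gc, gh, gl, gcost⟩ := glue5 cA cU cMi cDn cE
      (seg_ne_nil _ _ _) (ne_nil_of_head? hUh) (map_shf_ne_nil _ (seg_ne_nil _ _ _))
      (ne_nil_of_head? hDnh) (seg_ne_nil _ _ _) lk1 lk2 lk3 lk4
    have hacc : Acc' M _ := ⟨gc, C.γ 0, C.γ C.L, by rw [gh, head?_seg],
      by rw [gl, getLast?_seg C.γ (by omega : e2 ≤ C.L)], C.hinit, C.h00, C.hfin⟩
    refine C.no_other _ hacc ?_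
    rw [gcost, hUcost, hDncost, cost_map_shf]
    rw [cost_seg M C.γ (by omega : (0:ℕ) ≤ tf l1), cost_seg M C.γ (by omega : tf l1 ≤ tf l2),
      cost_seg M C.γ (by omega : tf l2 ≤ e1), cost_seg M C.γ (by omega : e1 ≤ e2),
      cost_seg M C.γ (by omega : e2 ≤ C.L)]
    have hs := sum_split5 (fun t => lc M (C.γ t) (C.γ (t+1))) (by omega : tf l1 ≤ tf l2)
      (by omega : tf l2 ≤ e1) (by omega : e1 ≤ e2) (by omega : e2 ≤ C.L)
    rw [C.htot] at hs
    beta_reduce at hs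
    have hmul1 : (dd+1) * (∑ t ∈ Finset.Ico (tf l1) (tf l2), lc M (C.γ t) (C.γ (t+1))) =
        (∑ t ∈ Finset.Ico (tf l1) (tf l2), lc M (C.γ t) (C.γ (t+1))) +
          dd * (∑ t ∈ Finset.Ico (tf l1) (tf l2), lc M (C.γ t) (C.γ (t+1))) := by ring
    have hmul2 : (d+1) * (∑ t ∈ Finset.Ico e1 e2, lc M (C.γ t) (C.γ (t+1))) =
        (∑ t ∈ Finset.Ico e1 e2, lc M (C.γ t) (C.γ (t+1))) +
          d * (∑ t ∈ Finset.Ico e1 e2, lc M (C.γ t) (C.γ (t+1))) := by ring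
    have hmul3 : 0 < d * (∑ t ∈ Finset.Ico e1 e2, lc M (C.γ t) (C.γ (t+1))) :=
      Nat.mul_pos (by omega) (by omega)
    omega


lemma Ctx.main_bound (C : Ctx M n) : n ≤ 14 * Fintype.card Q ^ 2 := by
  classical
  set m := Fintype.card Q with hm
  have hm1 : 1 ≤ m := by
    rw [hm]
    exact Fintype.card_pos_iff.mpr ⟨(C.γ 0).1⟩
  -- the last zero position
  obtain ⟨z, hzL, hz0, hzmax⟩ : ∃ z, z ≤ C.L ∧ (C.γ z).2 = 0 ∧
      ∀ i, i ≤ C.L → (C.γ i).2 = 0 → i ≤ z := by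
    have hbdd : BddAbove {i | i ≤ C.L ∧ (C.γ i).2 = 0} := ⟨C.L, fun x hx => hx.1⟩
    have hmem := Nat.sSup_mem (⟨0, Nat.zero_le _, C.h00⟩ :
      {i | i ≤ C.L ∧ (C.γ i).2 = 0}.Nonempty) hbdd
    exact ⟨_, hmem.1, hmem.2, fun i h1 h2 => le_csSup hbdd ⟨h1, h2⟩⟩
  have hz : ∀ i, z < i → i ≤ C.L → 1 ≤ (C.γ i).2 := by
    intro i h1 h2
    by_contra hcon
    have : (C.γ i).2 = 0 := by omega
    have := hzmax i h2 this
    omega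
  -- last zero before e
  obtain ⟨az, haz⟩ : ∃ az : ℕ → ℕ, ∀ e, e ≤ C.L → az e ≤ e ∧ (C.γ (az e)).2 = 0 ∧
      ∀ i, i ≤ e → (C.γ i).2 = 0 → i ≤ az e := by
    refine ⟨fun e => sSup {i | i ≤ e ∧ (C.γ i).2 = 0}, fun e he => ?_⟩
    have hbdd : BddAbove {i | i ≤ e ∧ (C.γ i).2 = 0} := ⟨e, fun x hx => hx.1⟩
    have hmem := Nat.sSup_mem (⟨0, Nat.zero_le _, C.h00⟩ :
      {i | i ≤ e ∧ (C.γ i).2 = 0}.Nonempty) hbdd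
    exact ⟨hmem.1, hmem.2, fun i h1 h2 => le_csSup hbdd ⟨h1, h2⟩⟩
  -- first zero after e (for e ≤ z)
  obtain ⟨bz, hbz⟩ : ∃ bz : ℕ → ℕ, ∀ e, e ≤ z → e ≤ bz e ∧ (C.γ (bz e)).2 = 0 ∧ bz e ≤ z ∧
      ∀ i, e ≤ i → (C.γ i).2 = 0 → bz e ≤ i := by
    refine ⟨fun e => sInf {i | e ≤ i ∧ (C.γ i).2 = 0}, fun e he => ?_⟩
    have hmem := Nat.sInf_mem (⟨z, he, hz0⟩ : {i | e ≤ i ∧ (C.γ i).2 = 0}.Nonempty)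
    exact ⟨hmem.1, hmem.2, Nat.sInf_le ⟨he, hz0⟩, fun i h1 h2 => Nat.sInf_le ⟨h1, h2⟩⟩
  -- letters
  set S := (Finset.range C.L).filter (fun e => lc M (C.γ e) (C.γ (e+1)) = 1) with hS
  have hnS : n ≤ S.card := by
    rw [← C.htot, ← Finset.sum_filter_add_sum_filter_not (Finset.range C.L)
      (fun e => lc M (C.γ e) (C.γ (e+1)) = 1)]
    have h1 : ∑ e ∈ (Finset.range C.L).filter (fun e => lc M (C.γ e) (C.γ (e+1)) = 1),
        lc M (C.γ e) (C.γ (e+1)) = S.card := by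
      rw [hS, Finset.card_eq_sum_ones]
      exact Finset.sum_congr rfl (fun e he => (Finset.mem_filter.mp he).2)
    have h2 : ∑ e ∈ (Finset.range C.L).filter (fun e => ¬ lc M (C.γ e) (C.γ (e+1)) = 1), lc M (C.γ e) (C.γ (e+1)) = 0 := by
      apply Finset.sum_eq_zero
      intro e he
      have := (Finset.mem_filter.mp he).2
      have := lc_le_one M (C.γ e) (C.γ (e+1))
      omega
    rw [h2]
    omega
  set S1 := S.filter (fun e => (C.γ e).2 ≤ m) with hS1
  set S2 := S.filter (fun e => m + 1 ≤ (C.γ e).2 ∧ z < e) with hS2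
  set S3 := S.filter (fun e => m + 1 ≤ (C.γ e).2 ∧ e < z) with hS3
  have hsub : S ⊆ S1 ∪ S2 ∪ S3 := by
    intro e he
    rcases Nat.lt_or_ge m (C.γ e).2 with h | h
    · rcases Nat.lt_trichotomy e z with h' | h' | h'
      · exact Finset.mem_union_right _ (Finset.mem_filter.mpr ⟨he, by omega, h'⟩)
      · exfalso
        rw [h'] at h
        omega
      · exact Finset.mem_union_left _ (Finset.mem_union_right _
          (Finset.mem_filter.mpr ⟨he, by omega, h'⟩))
    · exact Finset.mem_union_left _ (Finset.mem_union_left _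
        (Finset.mem_filter.mpr ⟨he, h⟩))
  have hcard1 : S1.card ≤ m * (m + 1) := by
    have := Finset.card_le_card_of_injOn (s := S1) (f := fun e => C.γ e)
      (t := (Finset.univ : Finset Q) ×ˢ Finset.range (m+1)) ?_ ?_
    · rw [Finset.card_product, Finset.card_univ, Finset.card_range] at this
      exact this
    · intro e he
      have h1 := Finset.mem_filter.mp he
      have h2 := Finset.mem_filter.mp h1.1
      refine Finset.mem_product.mpr ⟨Finset.mem_univ _, Finset.mem_range.mpr ?_⟩
      show (C.γ e).2 < m + 1
      omega
    · intro e1 he1 e2 he2 heq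
      have h1 := Finset.mem_filter.mp (Finset.mem_coe.mp he1)
      have h2 := Finset.mem_filter.mp (Finset.mem_coe.mp he2)
      have h3 := Finset.mem_range.mp (Finset.mem_filter.mp h1.1).1
      have h4 := Finset.mem_range.mp (Finset.mem_filter.mp h2.1).1
      exact C.hinj e1 (by omega) e2 (by omega) heq
  have hcard2 : S2.card ≤ m := by
    have := Finset.card_le_card_of_injOn (s := S2) (f := fun e => (C.γ e).1)
      (t := (Finset.univ : Finset Q)) (fun e _ => Finset.mem_univ _) ?_
    · rw [Finset.card_univ] at this
      exact this
    · intro e1 he1 e2 he2 heq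
      have h1 := Finset.mem_filter.mp (Finset.mem_coe.mp he1)
      have h2 := Finset.mem_filter.mp (Finset.mem_coe.mp he2)
      have h3 := Finset.mem_filter.mp h1.1
      have h4 := Finset.mem_filter.mp h2.1
      have h5 := Finset.mem_range.mp h3.1
      have h6 := Finset.mem_range.mp h4.1
      by_contra hne
      rcases Nat.lt_or_ge e1 e2 with h | h
      · exact C.suffix_distinct hz h1.2.2 h h6 heq h3.2
      · exact C.suffix_distinct hz h2.2.2 (by omega) h5 heq.symm h4.2
  have harch : ∀ e1 e2, e1 ∈ S3 → e2 ∈ S3 → e1 < e2 → (C.γ e1).1 = (C.γ e2).1 →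
      (C.γ (az e1)).1 = (C.γ (az e2)).1 → False := by
    intro e1 e2 he1 he2 hlt12 heq1 heq2
    have h1 := Finset.mem_filter.mp he1
    have h2 := Finset.mem_filter.mp he2
    have h3 := Finset.mem_filter.mp h1.1
    have h4 := Finset.mem_filter.mp h2.1
    have h5 := Finset.mem_range.mp h3.1
    have h6 := Finset.mem_range.mp h4.1
    obtain ⟨ha1, ha2, ha3⟩ := haz e1 (by omega)
    obtain ⟨hb1, hb2, hb3⟩ := haz e2 (by omega)
    have hazeq : az e1 = az e2 := by
      have : C.γ (az e1) = C.γ (az e2) := Prod.ext heq2 (by omega)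
      exact C.hinj (az e1) (by omega) (az e2) (by omega) this
    obtain ⟨hc1, hc2, hc3, hc4⟩ := hbz e2 (by omega)
    have hae1 : az e2 < e1 := by
      have : az e1 ≠ e1 := by
        intro hh
        rw [hh] at ha2
        omega
      omega
    have he2b : e2 < bz e2 := by
      have : bz e2 ≠ e2 := by
        intro hh
        rw [hh] at hc2
        omega
      omega
    have hpos' : ∀ i, az e2 < i → i < bz e2 → 1 ≤ (C.γ i).2 := by
      intro i hi1 hi2
      by_contra hcon
      have hi0 : (C.γ i).2 = 0 := by omega
      rcases Nat.lt_or_ge e2 i with h | h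
      · have := hc4 i (by omega) hi0
        omega
      · have := hb3 i (by omega) hi0
        omega
    exact C.arch_distinct hae1 hlt12 he2b (by omega) hb2 hc2 hpos' heq1
      h1.2.1 h2.2.1 h3.2
  have hcard3 : S3.card ≤ m * m := by
    have := Finset.card_le_card_of_injOn (s := S3) (f := fun e => ((C.γ e).1, (C.γ (az e)).1))
      (t := (Finset.univ : Finset Q) ×ˢ (Finset.univ : Finset Q))
      (fun e _ => Finset.mem_product.mpr ⟨Finset.mem_univ _, Finset.mem_univ _⟩) ?_
    · rw [Finset.card_product, Finset.card_univ] at this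
      exact this
    · intro e1 he1 e2 he2 heq
      beta_reduce at heq
      rw [Prod.mk.injEq] at heq
      have hq1 : (C.γ e1).1 = (C.γ e2).1 := heq.1
      have hq2 : (C.γ (az e1)).1 = (C.γ (az e2)).1 := heq.2
      by_contra hne
      rcases Nat.lt_or_ge e1 e2 with h | h
      · exact harch e1 e2 (Finset.mem_coe.mp he1) (Finset.mem_coe.mp he2) h hq1 hq2
      · exact harch e2 e1 (Finset.mem_coe.mp he2) (Finset.mem_coe.mp he1) (by omega)
          hq1.symm hq2.symm
  have hcover : S.card ≤ S1.card + S2.card + S3.card :=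
    le_trans (Finset.card_le_card hsub)
      (le_trans (Finset.card_union_le _ _)
        (Nat.add_le_add_right (Finset.card_union_le _ _) _))
  have hmm : m ≤ m * m := Nat.le_mul_of_pos_left m (by omega)
  have hsq : m ^ 2 = m * m := sq m
  have hdist : m * (m + 1) = m * m + m := by ring
  omega

lemma final_bound [Fintype Q] (hlang : ∀ w : List Unit, M.Accepts w ↔ w = List.replicate n ()) :
    n ≤ 14 * Fintype.card Q ^ 2 := by
  obtain ⟨C⟩ := ctx_exists hlang
  exact C.main_bound

end OCAproof

/-- Any nondeterministic one-counter automaton over the unary alphabet whose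
language is exactly the singleton `{aⁿ}` satisfies `14 m² ≥ n`, where `m` is
its number of states; in particular `m ≥ √(n/14)`. -/
theorem counting_needs_sqrt_states (n : ℕ) (hn : 0 < n)
    {Q : Type*} [Fintype Q] (M : OCA Q Unit)
    (hlang : ∀ w : List Unit, M.Accepts w ↔ w = List.replicate n ()) :
    n ≤ 14 * Fintype.card Q ^ 2 ∧
    Real.sqrt ((n : ℝ) / 14) ≤ (Fintype.card Q : ℝ) := by
  have h1 : n ≤ 14 * Fintype.card Q ^ 2 := OCAproof.final_bound hlang
  refine ⟨h1, ?_⟩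
  have h2 : ((n : ℝ) / 14) ≤ (Fintype.card Q : ℝ) ^ 2 := by
    rw [div_le_iff₀ (by norm_num)]
    calc (n:ℝ) ≤ ((14 * Fintype.card Q ^ 2 : ℕ) : ℝ) := by exact_mod_cast h1
    _ = (Fintype.card Q:ℝ)^2 * 14 := by push_cast; ring
  calc Real.sqrt ((n:ℝ)/14) ≤ Real.sqrt ((Fintype.card Q:ℝ)^2) := Real.sqrt_le_sqrt h2
  _ = (Fintype.card Q:ℝ) := Real.sqrt_sq (by positivity)
end
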